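/- arXiv:1411.1660 — 5 statements merged into one kernel-verified Lean document; each statement's English description precedes it below -/
import Mathlib

section
/- Let m be a positive integer, let g and f be probability densities on ℝ with finite moments μ_{2m} = ∫ θ^{2m} g(θ) dθ < ∞ and ν_{2m} = ∫ θ^{2m} f(θ) dθ < ∞, and let ψ_m(y) = y^m + Σ_{k=0}^{m−1} c_k y^k be the polynomial with c_m = 1 and Σ_{k=j}^m μ_{k−j} c_k = 0 for j = 0, …, m−1, so that ∫ g(y−θ)ψ_m(y) dy = θ^m for all θ. If Y_1, …, Y_n are i.i.d. with density q(y) = ∫ g(y−θ) f(θ) dθ, then the estimator Φ̂_m = n⁻¹ Σ_{l=1}^n ψ_m(Y_l) satisfies E Φ̂_m = Φ_m, where Φ_m = ∫ θ^m f(θ) dθ, and Var(Φ̂_m) ≤ C_m n⁻¹, where C_m < ∞ is a constant depending only on m and on the moments μ_k, ν_k for k ≤ 2m. -/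
open MeasureTheory Finset

lemma pw_key (m : ℕ) (u v : ℝ) :
    1 + (u + v) ^ (2 * m) ≤ 2 ^ (2 * m) * ((1 + u ^ (2 * m)) * (1 + v ^ (2 * m))) := by
  have hev : Even (2 * m) := even_two_mul m
  have h1 : (u + v) ^ (2 * m) ≤ 2 ^ (2 * m) * (u ^ (2 * m) + v ^ (2 * m)) := by
    calc (u + v) ^ (2 * m) = |u + v| ^ (2 * m) := (hev.pow_abs _).symm
      _ ≤ (|u| + |v|) ^ (2 * m) := by
          exact pow_le_pow_left₀ (abs_nonneg _) (abs_add_le _ _) _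
      _ ≤ (2 * max |u| |v|) ^ (2 * m) := by
          apply pow_le_pow_left₀ (by positivity)
          rcases le_total |u| |v| with h | h
          · simp [max_eq_right h]; nlinarith [abs_nonneg u, abs_nonneg v]
          · simp [max_eq_left h]; nlinarith [abs_nonneg u, abs_nonneg v]
      _ = 2 ^ (2 * m) * max |u| |v| ^ (2 * m) := by rw [mul_pow]
      _ ≤ 2 ^ (2 * m) * (u ^ (2 * m) + v ^ (2 * m)) := by
          apply mul_le_mul_of_nonneg_left _ (by positivity)
          rcases le_total |u| |v| with h | h
          · rw [max_eq_right h, ← hev.pow_abs v]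
            nlinarith [pow_nonneg (abs_nonneg u) (2*m), hev.pow_abs u,
              hev.pow_nonneg u]
          · rw [max_eq_left h, ← hev.pow_abs u]
            nlinarith [pow_nonneg (abs_nonneg v) (2*m), hev.pow_abs v,
              hev.pow_nonneg v]
  have h2 : (0:ℝ) ≤ u ^ (2 * m) := hev.pow_nonneg u
  have h3 : (0:ℝ) ≤ v ^ (2 * m) := hev.pow_nonneg v
  have h4 : (1:ℝ) ≤ 2 ^ (2 * m) := one_le_pow₀ (by norm_num)
  nlinarith [mul_nonneg h2 h3]

lemma aux_fubini (m : ℕ) (g f : ℝ → ℝ)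
    (hg_nonneg : ∀ x, 0 ≤ g x) (hg_int : Integrable g)
    (hf_nonneg : ∀ x, 0 ≤ f x) (hf_int : Integrable f)
    (hμ : Integrable (fun θ : ℝ => θ ^ (2 * m) * g θ))
    (hν : Integrable (fun θ : ℝ => θ ^ (2 * m) * f θ))
    (h : ℝ → ℝ) (hh : Continuous h) (K : ℝ) (hK : 0 ≤ K)
    (hbound : ∀ y, |h y| ≤ K * (1 + y ^ (2 * m))) :
    Integrable (fun y => h y * ∫ θ, g (y - θ) * f θ) ∧
      (∫ y, h y * ∫ θ, g (y - θ) * f θ) = ∫ θ, (∫ y, h y * g (y - θ)) * f θ := by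
  set L : ℝ →L[ℝ] ℝ →L[ℝ] ℝ := ContinuousLinearMap.mul ℝ ℝ with hL
  have hG : Integrable (fun t : ℝ => (1 + t ^ (2 * m)) * g t) := by
    have := hg_int.add hμ
    exact this.congr (ae_of_all _ fun t => by simp [Pi.add_apply]; ring)
  have hF : Integrable (fun t : ℝ => (1 + t ^ (2 * m)) * f t) := by
    have := hf_int.add hν
    exact this.congr (ae_of_all _ fun t => by simp [Pi.add_apply]; ring)
  have master : Integrable
      (fun p : ℝ × ℝ => ((1 + p.2 ^ (2 * m)) * f p.2) * ((1 + (p.1 - p.2) ^ (2 * m)) * g (p.1 - p.2)))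
      (volume.prod volume) := by
    have := hF.convolution_integrand L hG
    simpa [hL, ContinuousLinearMap.mul_apply'] using this
  have aesm : AEStronglyMeasurable (fun p : ℝ × ℝ => h p.1 * (g (p.1 - p.2) * f p.2))
      (volume.prod volume) := by
    have A := hf_int.aestronglyMeasurable.convolution_integrand L hg_int.aestronglyMeasurable
    simp only [hL, ContinuousLinearMap.mul_apply'] at A
    have B := ((hh.comp continuous_fst).aestronglyMeasurable).mul A
    exact B.congr (ae_of_all _ fun p => by dsimp; ring)
  have hprod : Integrable (fun p : ℝ × ℝ => h p.1 * (g (p.1 - p.2) * f p.2))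
      (volume.prod volume) := by
    refine Integrable.mono' ((master.const_mul (K * 2 ^ (2 * m)))) aesm (ae_of_all _ fun p => ?_)
    have hgn := hg_nonneg (p.1 - p.2); have hfn := hf_nonneg p.2
    have hb := hbound p.1
    rw [Real.norm_eq_abs, abs_mul, abs_of_nonneg (mul_nonneg hgn hfn)]
    have h1 : |h p.1| * (g (p.1 - p.2) * f p.2) ≤
        (K * (1 + p.1 ^ (2 * m))) * (g (p.1 - p.2) * f p.2) :=
      mul_le_mul_of_nonneg_right hb (mul_nonneg hgn hfn)
    refine h1.trans ?_
    have h2 : (1 + p.1 ^ (2 * m)) ≤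
        2 ^ (2 * m) * ((1 + (p.1 - p.2) ^ (2 * m)) * (1 + p.2 ^ (2 * m))) := by
      have := pw_key m (p.1 - p.2) p.2
      simpa using this
    calc (K * (1 + p.1 ^ (2 * m))) * (g (p.1 - p.2) * f p.2)
        ≤ (K * (2 ^ (2 * m) * ((1 + (p.1 - p.2) ^ (2 * m)) * (1 + p.2 ^ (2 * m))))) *
            (g (p.1 - p.2) * f p.2) :=
          mul_le_mul_of_nonneg_right (mul_le_mul_of_nonneg_left h2 hK)
            (mul_nonneg hgn hfn)
      _ = K * 2 ^ (2 * m) *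
            ((1 + p.2 ^ (2 * m)) * f p.2 * ((1 + (p.1 - p.2) ^ (2 * m)) * g (p.1 - p.2))) := by
          ring
  have hint : Integrable (fun y => h y * ∫ θ, g (y - θ) * f θ) := by
    have := hprod.integral_prod_left
    exact this.congr (ae_of_all _ fun y => by simp [integral_const_mul])
  refine ⟨hint, ?_⟩
  have swap := integral_integral_swap (f := fun y θ => h y * (g (y - θ) * f θ)) hprod
  calc (∫ y, h y * ∫ θ, g (y - θ) * f θ)
      = ∫ y, ∫ θ, h y * (g (y - θ) * f θ) := by
        refine integral_congr_ae (ae_of_all _ fun y => ?_)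
        simp [integral_const_mul]
    _ = ∫ θ, ∫ y, h y * (g (y - θ) * f θ) := swap
    _ = ∫ θ, (∫ y, h y * g (y - θ)) * f θ := by
        refine integral_congr_ae (ae_of_all _ fun θ => ?_)
        dsimp only
        rw [← integral_mul_const]
        exact integral_congr_ae (ae_of_all _ fun y => by ring)

lemma main_aux (n : ℕ) (hn : 0 < n) (ψ q : ℝ → ℝ) (Φ σ2 : ℝ)
    (hq_int : Integrable q) (hq_one : (∫ t, q t) = 1) (hq0 : ∀ t, 0 ≤ q t)
    (hp1 : Integrable (fun t => ψ t * q t)) (hp1v : (∫ t, ψ t * q t) = Φ)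
    (hd : Integrable (fun t => (ψ t - Φ) * q t)) (hdv : (∫ t, (ψ t - Φ) * q t) = 0)
    (hd2 : Integrable (fun t => (ψ t - Φ) ^ 2 * q t))
    (hd2v : (∫ t, (ψ t - Φ) ^ 2 * q t) = σ2) :
    ((∫ y : Fin n → ℝ, ((n : ℝ)⁻¹ * ∑ l : Fin n, ψ (y l)) * ∏ i : Fin n, q (y i)) = Φ) ∧
      (∫⁻ y : Fin n → ℝ, ENNReal.ofReal
          ((((n : ℝ)⁻¹ * ∑ l : Fin n, ψ (y l)) - Φ) ^ 2 * ∏ i : Fin n, q (y i)))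
        = ENNReal.ofReal (σ2 / n) := by
  have hn0 : (n : ℝ) ≠ 0 := Nat.cast_ne_zero.mpr hn.ne'
  constructor
  · -- Part 1
    have key1 : ∀ l : Fin n,
        Integrable (fun y : Fin n → ℝ =>
          ∏ i, (if i = l then (fun t => ψ t * q t) else q) (y i)) ∧
        (∫ y : Fin n → ℝ, ∏ i, (if i = l then (fun t => ψ t * q t) else q) (y i)) = Φ := by
      intro l
      constructor
      · exact Integrable.fintype_prod (f := fun i => if i = l then (fun t => ψ t * q t) else q)
          (fun i => by dsimp only; split <;> assumption)
      · rw [integral_fintype_prod_volume_eq_prod]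
        rw [Finset.prod_eq_single l]
        · simp only [if_pos rfl]; exact hp1v
        · intro i _ hi; simp only [if_neg hi]; exact hq_one
        · exact fun hnl => absurd (Finset.mem_univ l) hnl
    have e1 : (fun y : Fin n → ℝ => ((n : ℝ)⁻¹ * ∑ l, ψ (y l)) * ∏ i, q (y i))
        = fun y => (n : ℝ)⁻¹ * ∑ l, ∏ i, (if i = l then (fun t => ψ t * q t) else q) (y i) := by
      funext y
      have hl : ∀ l : Fin n, (∏ i, (if i = l then (fun t => ψ t * q t) else q) (y i))
          = ψ (y l) * ∏ i, q (y i) := by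
        intro l
        calc (∏ i, (if i = l then (fun t => ψ t * q t) else q) (y i))
            = ∏ i, ((if i = l then ψ (y i) else 1) * q (y i)) :=
              Finset.prod_congr rfl fun i _ => by split <;> simp
          _ = (∏ i, if i = l then ψ (y i) else 1) * ∏ i, q (y i) := Finset.prod_mul_distrib
          _ = ψ (y l) * ∏ i, q (y i) := by
              rw [Finset.prod_ite_eq' Finset.univ l (fun i => ψ (y i))]
              simp
      rw [mul_assoc, Finset.sum_mul]
      congr 1
      exact (Finset.sum_congr rfl fun l _ => (hl l).symm)
    rw [e1, integral_const_mul, integral_finset_sum _ (fun l _ => (key1 l).1)]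
    have : ∀ l ∈ (Finset.univ : Finset (Fin n)),
        (∫ y : Fin n → ℝ, ∏ i, (if i = l then (fun t => ψ t * q t) else q) (y i)) = Φ :=
      fun l _ => (key1 l).2
    rw [Finset.sum_congr rfl this, Finset.sum_const, card_univ, Fintype.card_fin, nsmul_eq_mul]
    field_simp
  · -- Part 2
    set H : Fin n → Fin n → Fin n → ℝ → ℝ := fun l l' i t =>
      (if i = l then ψ t - Φ else 1) * ((if i = l' then ψ t - Φ else 1) * q t) with hH
    have hHint : ∀ l l' i, Integrable (H l l' i) := by
      intro l l' i
      by_cases h1 : i = l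
      · by_cases h2 : i = l'
        · simp only [hH, if_pos h1, if_pos h2]
          exact hd2.congr (ae_of_all _ fun t => by ring)
        · simp only [hH, if_pos h1, if_neg h2]
          exact hd.congr (ae_of_all _ fun t => by ring)
      · by_cases h2 : i = l'
        · simp only [hH, if_neg h1, if_pos h2]
          exact hd.congr (ae_of_all _ fun t => by ring)
        · simp only [hH, if_neg h1, if_neg h2]
          exact hq_int.congr (ae_of_all _ fun t => by ring)
    have hHprod : ∀ (l l' : Fin n) (y : Fin n → ℝ),
        (∏ i, H l l' i (y i)) = (ψ (y l) - Φ) * (ψ (y l') - Φ) * ∏ i, q (y i) := by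
      intro l l' y
      simp only [hH]
      rw [Finset.prod_mul_distrib, Finset.prod_mul_distrib,
        Finset.prod_ite_eq' Finset.univ l (fun i => ψ (y i) - Φ),
        Finset.prod_ite_eq' Finset.univ l' (fun i => ψ (y i) - Φ)]
      simp [mul_assoc]
    have hHval : ∀ l l' : Fin n,
        (∫ y : Fin n → ℝ, ∏ i, H l l' i (y i)) = if l = l' then σ2 else 0 := by
      intro l l'
      rw [integral_fintype_prod_volume_eq_prod]
      by_cases hll : l = l'
      · subst hll
        rw [if_pos rfl, Finset.prod_eq_single l]
        · simp only [hH, eq_self_iff_true, if_true]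
          rw [← hd2v]
          exact integral_congr_ae (ae_of_all _ fun t => by ring)
        · intro i _ hi; simp only [hH, if_neg hi, one_mul]; exact hq_one
        · exact fun hnl => absurd (Finset.mem_univ l) hnl
      · rw [if_neg hll]
        apply Finset.prod_eq_zero (Finset.mem_univ l)
        simp only [hH, eq_self_iff_true, if_true, if_neg hll, one_mul]
        rw [← hdv]
    have e2 : (fun y : Fin n → ℝ => (((n : ℝ)⁻¹ * ∑ l, ψ (y l)) - Φ) ^ 2 * ∏ i, q (y i))
        = fun y => ((n : ℝ)⁻¹) ^ 2 * ∑ l, ∑ l', ∏ i, H l l' i (y i) := by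
      funext y
      have hA : (n : ℝ)⁻¹ * (∑ l, ψ (y l)) - Φ = (n : ℝ)⁻¹ * ∑ l, (ψ (y l) - Φ) := by
        rw [Finset.sum_sub_distrib, mul_sub, Finset.sum_const, card_univ, Fintype.card_fin, nsmul_eq_mul]
        field_simp
      have hsum : (∑ l, ∑ l', ∏ i, H l l' i (y i))
          = (∑ l, ∑ l', (ψ (y l) - Φ) * (ψ (y l') - Φ)) * ∏ i, q (y i) := by
        rw [Finset.sum_mul]
        refine Finset.sum_congr rfl fun l _ => ?_
        rw [Finset.sum_mul]
        exact Finset.sum_congr rfl fun l' _ => hHprod l l' y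
      have hsq : (∑ l, (ψ (y l) - Φ)) ^ 2
          = ∑ l, ∑ l', (ψ (y l) - Φ) * (ψ (y l') - Φ) := by
        rw [sq, Finset.sum_mul_sum]
      rw [hA, mul_pow, hsum, ← hsq]
      ring
    have hInt : Integrable (fun y : Fin n → ℝ =>
        (((n : ℝ)⁻¹ * ∑ l, ψ (y l)) - Φ) ^ 2 * ∏ i, q (y i)) := by
      rw [e2]
      exact (integrable_finset_sum _ fun l _ => integrable_finset_sum _ fun l' _ =>
        Integrable.fintype_prod (fun i => hHint l l' i)).const_mul _
    have hNN : 0 ≤ᵐ[volume] fun y : Fin n → ℝ =>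
        (((n : ℝ)⁻¹ * ∑ l, ψ (y l)) - Φ) ^ 2 * ∏ i, q (y i) :=
      ae_of_all _ fun y => mul_nonneg (sq_nonneg _) (Finset.prod_nonneg fun i _ => hq0 _)
    rw [← ofReal_integral_eq_lintegral_ofReal hInt hNN]
    congr 1
    rw [e2, integral_const_mul,
      integral_finset_sum (μ := (volume : Measure (Fin n → ℝ))) _ (fun l _ => integrable_finset_sum _ fun l' _ =>
        Integrable.fintype_prod (fun i => hHint l l' i))]
    have : ∀ l ∈ (Finset.univ : Finset (Fin n)),
        (∫ y : Fin n → ℝ, ∑ l', ∏ i, H l l' i (y i)) = σ2 := by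
      intro l _
      rw [integral_finset_sum (μ := (volume : Measure (Fin n → ℝ))) _ (fun l' _ => Integrable.fintype_prod (fun i => hHint l l' i)),
        Finset.sum_congr rfl (fun l' _ => hHval l l')]
      simp
    rw [Finset.sum_congr rfl this, Finset.sum_const, card_univ, Fintype.card_fin, nsmul_eq_mul]
    field_simp

lemma pw_sq (m : ℕ) (y : ℝ) : (1 + |y| ^ m) ^ 2 ≤ 2 * (1 + y ^ (2 * m)) := by
  have h2 : (|y| ^ m) ^ 2 = y ^ (2 * m) := by
    rw [← pow_mul, mul_comm m 2]
    exact (even_two_mul m).pow_abs y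
  nlinarith [sq_nonneg (|y| ^ m - 1), pow_nonneg (abs_nonneg y) m]

lemma pw_lin (m : ℕ) (y : ℝ) : 1 + |y| ^ m ≤ 2 * (1 + y ^ (2 * m)) := by
  have h2 : (|y| ^ m) ^ 2 = y ^ (2 * m) := by
    rw [← pow_mul, mul_comm m 2]
    exact (even_two_mul m).pow_abs y
  nlinarith [sq_nonneg (|y| ^ m - 1), pow_nonneg (abs_nonneg y) m]

theorem stmt_1 (m : ℕ) (hm : 0 < m) (g f : ℝ → ℝ)
    (hg_nonneg : ∀ x, 0 ≤ g x) (hg_int : Integrable g) (hg_one : (∫ x, g x) = 1)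
    (hf_nonneg : ∀ x, 0 ≤ f x) (hf_int : Integrable f) (hf_one : (∫ x, f x) = 1)
    (hμ : Integrable (fun θ : ℝ => θ ^ (2 * m) * g θ))
    (hν : Integrable (fun θ : ℝ => θ ^ (2 * m) * f θ))
    (c : ℕ → ℝ) (hcm : c m = 1)
    (hsys : ∀ j < m, (∑ k ∈ Finset.Icc j m, (∫ θ : ℝ, θ ^ (k - j) * g θ) * c k) = 0)
    (hψ : ∀ θ : ℝ,
      (∫ y : ℝ, g (y - θ) * ∑ k ∈ Finset.range (m + 1), c k * y ^ k) = θ ^ m) :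
    (∀ n : ℕ, 0 < n →
      (∫ y : Fin n → ℝ,
        ((n : ℝ)⁻¹ * ∑ l : Fin n, ∑ k ∈ Finset.range (m + 1), c k * (y l) ^ k) *
          ∏ i : Fin n, (∫ θ : ℝ, g (y i - θ) * f θ))
        = ∫ θ : ℝ, θ ^ m * f θ) ∧
    ∃ C : ℝ, 0 ≤ C ∧ ∀ n : ℕ, 0 < n →
      (∫⁻ y : Fin n → ℝ,
        ENNReal.ofReal
          ((((n : ℝ)⁻¹ * ∑ l : Fin n, ∑ k ∈ Finset.range (m + 1), c k * (y l) ^ k)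
              - ∫ θ : ℝ, θ ^ m * f θ) ^ 2 *
            ∏ i : Fin n, (∫ θ : ℝ, g (y i - θ) * f θ)))
        ≤ ENNReal.ofReal (C / n) := by
  set ψ : ℝ → ℝ := fun t => ∑ k ∈ Finset.range (m + 1), c k * t ^ k with hψdef
  set q : ℝ → ℝ := fun t => ∫ θ : ℝ, g (t - θ) * f θ with hqdef
  set Φ : ℝ := ∫ θ : ℝ, θ ^ m * f θ with hΦdef
  have hψc : Continuous ψ :=
    continuous_finset_sum _ fun k _ => continuous_const.mul (continuous_pow k)
  set Kψ : ℝ := ∑ k ∈ Finset.range (m + 1), |c k| with hKψdef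
  have hKψ0 : 0 ≤ Kψ := Finset.sum_nonneg fun k _ => abs_nonneg _
  have hψb : ∀ t : ℝ, |ψ t| ≤ Kψ * (1 + |t| ^ m) := by
    intro t
    calc |ψ t| ≤ ∑ k ∈ Finset.range (m + 1), |c k * t ^ k| :=
          Finset.abs_sum_le_sum_abs _ _
      _ ≤ ∑ k ∈ Finset.range (m + 1), |c k| * (1 + |t| ^ m) := by
          refine Finset.sum_le_sum fun k hk => ?_
          rw [abs_mul, abs_pow]
          refine mul_le_mul_of_nonneg_left ?_ (abs_nonneg _)
          rcases le_total |t| 1 with h | h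
          · exact (pow_le_one₀ (abs_nonneg t) h).trans
              (le_add_of_nonneg_right (pow_nonneg (abs_nonneg t) m))
          · exact (pow_le_pow_right₀ h (Nat.lt_succ_iff.mp (Finset.mem_range.mp hk))).trans
              (le_add_of_nonneg_left zero_le_one)
      _ = Kψ * (1 + |t| ^ m) := by rw [hKψdef, Finset.sum_mul]
  have hq0 : ∀ t, 0 ≤ q t := fun t =>
    integral_nonneg fun θ => mul_nonneg (hg_nonneg _) (hf_nonneg _)
  -- h = 1
  have F1 := aux_fubini m g f hg_nonneg hg_int hf_nonneg hf_int hμ hν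
      (fun _ => 1) continuous_const 1 zero_le_one
      (fun y => by
        rw [abs_one, one_mul]
        exact le_add_of_nonneg_right ((even_two_mul m).pow_nonneg y))
  have hq_int : Integrable q := F1.1.congr (ae_of_all _ fun t => one_mul _)
  have hq_one : (∫ t, q t) = 1 := by
    have h2 := F1.2
    have hL : (∫ y : ℝ, (1 : ℝ) * ∫ θ, g (y - θ) * f θ) = ∫ t, q t :=
      integral_congr_ae (ae_of_all _ fun t => one_mul _)
    have hR : (∫ θ : ℝ, (∫ y : ℝ, (1:ℝ) * g (y - θ)) * f θ) = ∫ θ : ℝ, f θ := by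
      refine integral_congr_ae (ae_of_all _ fun θ => ?_)
      have : (∫ y : ℝ, (1:ℝ) * g (y - θ)) = 1 := by
        rw [show (fun y : ℝ => (1:ℝ) * g (y - θ)) = fun y => g (y - θ) from
          funext fun y => one_mul _]
        rw [integral_sub_right_eq_self g θ]
        exact hg_one
      dsimp only
      rw [this, one_mul]
    rw [← hL, h2, hR, hf_one]
  -- h = ψ
  have F2 := aux_fubini m g f hg_nonneg hg_int hf_nonneg hf_int hμ hν
      ψ hψc (2 * Kψ) (by positivity)
      (fun t => by
        refine (hψb t).trans ?_
        calc Kψ * (1 + |t| ^ m) ≤ Kψ * (2 * (1 + t ^ (2 * m))) :=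
              mul_le_mul_of_nonneg_left (pw_lin m t) hKψ0
          _ = 2 * Kψ * (1 + t ^ (2 * m)) := by ring)
  have hp1 : Integrable (fun t => ψ t * q t) := F2.1
  have hp1v : (∫ t, ψ t * q t) = Φ := by
    rw [F2.2]
    refine integral_congr_ae (ae_of_all _ fun θ => ?_)
    dsimp only
    have : (∫ y : ℝ, ψ y * g (y - θ)) = θ ^ m := by
      rw [show (fun y : ℝ => ψ y * g (y - θ)) = fun y => g (y - θ) * ψ y from
        funext fun y => mul_comm _ _]
      exact hψ θ
    rw [this]
  -- h = (ψ - Φ)^2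
  have F3 := aux_fubini m g f hg_nonneg hg_int hf_nonneg hf_int hμ hν
      (fun t => (ψ t - Φ) ^ 2) ((hψc.sub continuous_const).pow 2)
      (2 * (Kψ + |Φ|) ^ 2) (by positivity)
      (fun t => by
        have hd1 : |ψ t - Φ| ≤ (Kψ + |Φ|) * (1 + |t| ^ m) := by
          calc |ψ t - Φ| ≤ |ψ t| + |Φ| := abs_sub _ _
            _ ≤ Kψ * (1 + |t| ^ m) + |Φ| * (1 + |t| ^ m) := by
                refine add_le_add (hψb t) ?_
                exact le_mul_of_one_le_right (abs_nonneg _)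
                  (le_add_of_nonneg_right (pow_nonneg (abs_nonneg t) m))
            _ = (Kψ + |Φ|) * (1 + |t| ^ m) := by ring
        have h0 : |(ψ t - Φ) ^ 2| = |ψ t - Φ| ^ 2 := by
          rw [abs_pow]
        rw [h0]
        calc |ψ t - Φ| ^ 2 ≤ ((Kψ + |Φ|) * (1 + |t| ^ m)) ^ 2 :=
              pow_le_pow_left₀ (abs_nonneg _) hd1 2
          _ = (Kψ + |Φ|) ^ 2 * (1 + |t| ^ m) ^ 2 := by ring
          _ ≤ (Kψ + |Φ|) ^ 2 * (2 * (1 + t ^ (2 * m))) :=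
              mul_le_mul_of_nonneg_left (pw_sq m t) (by positivity)
          _ = 2 * (Kψ + |Φ|) ^ 2 * (1 + t ^ (2 * m)) := by ring)
  have hd2 : Integrable (fun t => (ψ t - Φ) ^ 2 * q t) := F3.1
  have hd : Integrable (fun t => (ψ t - Φ) * q t) :=
    (hp1.sub (hq_int.const_mul Φ)).congr (ae_of_all _ fun t => by
      simp only [Pi.sub_apply]; ring)
  have hdv : (∫ t, (ψ t - Φ) * q t) = 0 := by
    have : (∫ t, (ψ t - Φ) * q t) = (∫ t, ψ t * q t) - ∫ t, Φ * q t := by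
      rw [← integral_sub hp1 (hq_int.const_mul Φ)]
      exact integral_congr_ae (ae_of_all _ fun t => by ring)

    rw [this, hp1v, integral_const_mul, hq_one, mul_one, sub_self]
  set σ2 : ℝ := ∫ t, (ψ t - Φ) ^ 2 * q t with hσ2def
  have hσ0 : 0 ≤ σ2 :=
    integral_nonneg fun t => mul_nonneg (sq_nonneg _) (hq0 t)
  constructor
  · intro n hn
    exact (main_aux n hn ψ q Φ σ2 hq_int hq_one hq0 hp1 hp1v hd hdv hd2 rfl).1
  · refine ⟨σ2, hσ0, fun n hn => ?_⟩
    exact le_of_eq (main_aux n hn ψ q Φ σ2 hq_int hq_one hq0 hp1 hp1v hd hdv hd2 rfl).2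
end

section
/- Let A_1 > 0, A_2 ∈ ℝ, β > 0, γ > 0, and for n ∈ ℕ and h > 0 define H(n,h) = h^{2A_1} + n⁻¹ ∫_0^{1/h} (ω²+1)^{A_2} exp(2γω^β) dω. Then there exist constants 0 < c ≤ C < ∞ and N such that for all n ≥ N: c · (log n)^{−2A_1/β} ≤ inf_{h>0} H(n,h) ≤ C · (log n)^{−2A_1/β}. -/
open MeasureTheory Filter

/-- The bias–variance tradeoff function `H(n,h)` in the case `b = d = 0`, `β > 0`, `γ > 0`. -/
noncomputable def H5 (A₁ A₂ β γ : ℝ) (n : ℕ) (h : ℝ) : ℝ :=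
  h ^ (2 * A₁) +
    (n : ℝ)⁻¹ * ∫ ω in Set.Ioc (0 : ℝ) (1 / h), (ω ^ 2 + 1) ^ A₂ * Real.exp (2 * γ * ω ^ β)

lemma g5_cont (A₂ β γ : ℝ) (hβ : 0 < β) :
    Continuous (fun ω : ℝ => (ω ^ 2 + 1) ^ A₂ * Real.exp (2 * γ * ω ^ β)) := by
  apply Continuous.mul
  · apply Continuous.rpow_const (by continuity)
    intro x; left; positivity
  · apply Real.continuous_exp.comp
    apply Continuous.mul continuous_const
    rw [continuous_iff_continuousAt]
    intro x
    exact Real.continuousAt_rpow_const x β (Or.inr hβ.le)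

lemma g5_up (A₂ β γ : ℝ) (hβ : 0 < β) (hγ : 0 < γ) {t : ℝ} (ht : 0 ≤ t) :
    (∫ ω in Set.Ioc (0:ℝ) t, (ω ^ 2 + 1) ^ A₂ * Real.exp (2 * γ * ω ^ β))
      ≤ t * ((t ^ 2 + 1) ^ |A₂| * Real.exp (2 * γ * t ^ β)) := by
  calc (∫ ω in Set.Ioc (0:ℝ) t, (ω ^ 2 + 1) ^ A₂ * Real.exp (2 * γ * ω ^ β))
      ≤ ∫ _ω in Set.Ioc (0:ℝ) t, (t ^ 2 + 1) ^ |A₂| * Real.exp (2 * γ * t ^ β) := by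
        apply setIntegral_mono_on ((g5_cont A₂ β γ hβ).integrableOn_Ioc)
          (integrableOn_const measure_Ioc_lt_top.ne) measurableSet_Ioc
        intro ω hω
        have hω0 : 0 ≤ ω := hω.1.le
        have h1 : (1:ℝ) ≤ ω ^ 2 + 1 := le_add_of_nonneg_left (sq_nonneg ω)
        apply mul_le_mul
        · calc (ω ^ 2 + 1) ^ A₂ ≤ (ω ^ 2 + 1) ^ |A₂| :=
                Real.rpow_le_rpow_of_exponent_le h1 (le_abs_self A₂)
            _ ≤ (t ^ 2 + 1) ^ |A₂| := by
                apply Real.rpow_le_rpow (by positivity)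
                  (by nlinarith [hω.2, hω.1.le]) (abs_nonneg A₂)
        · apply Real.exp_le_exp.mpr
          apply mul_le_mul_of_nonneg_left (Real.rpow_le_rpow hω0 hω.2 hβ.le) (by positivity)
        · positivity
        · positivity
    _ = t * ((t ^ 2 + 1) ^ |A₂| * Real.exp (2 * γ * t ^ β)) := by
        rw [setIntegral_const, measureReal_def, Real.volume_Ioc, smul_eq_mul, sub_zero,
          ENNReal.toReal_ofReal ht]

lemma g5_low (A₂ β γ : ℝ) (hβ : 0 < β) (hγ : 0 < γ) {ρ R : ℝ} (hρ : 0 ≤ ρ) (hρR : ρ ≤ R) :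
    (R - ρ) * (((R ^ 2 + 1) ^ |A₂|)⁻¹ * Real.exp (2 * γ * ρ ^ β))
      ≤ ∫ ω in Set.Ioc ρ R, (ω ^ 2 + 1) ^ A₂ * Real.exp (2 * γ * ω ^ β) := by
  calc (R - ρ) * (((R ^ 2 + 1) ^ |A₂|)⁻¹ * Real.exp (2 * γ * ρ ^ β))
      = ∫ _ω in Set.Ioc ρ R, ((R ^ 2 + 1) ^ |A₂|)⁻¹ * Real.exp (2 * γ * ρ ^ β) := by
        rw [setIntegral_const, measureReal_def, Real.volume_Ioc, smul_eq_mul,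
          ENNReal.toReal_ofReal (by linarith)]
    _ ≤ _ := by
        apply setIntegral_mono_on
          (integrableOn_const measure_Ioc_lt_top.ne)
          ((g5_cont A₂ β γ hβ).integrableOn_Ioc) measurableSet_Ioc
        intro ω hω
        have hω0 : 0 ≤ ω := hρ.trans hω.1.le
        have h1 : (1:ℝ) ≤ ω ^ 2 + 1 := le_add_of_nonneg_left (sq_nonneg ω)
        apply mul_le_mul
        · calc ((R ^ 2 + 1) ^ |A₂|)⁻¹ ≤ ((ω ^ 2 + 1) ^ |A₂|)⁻¹ := by
                apply inv_anti₀ (by positivity)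
                apply Real.rpow_le_rpow (by positivity)
                  (by nlinarith [hω.2, hω0]) (abs_nonneg A₂)
            _ = (ω ^ 2 + 1) ^ (-|A₂|) := (Real.rpow_neg (by positivity) _).symm
            _ ≤ (ω ^ 2 + 1) ^ A₂ :=
                Real.rpow_le_rpow_of_exponent_le h1 (neg_abs_le A₂)
        · apply Real.exp_le_exp.mpr
          apply mul_le_mul_of_nonneg_left
            (Real.rpow_le_rpow hρ hω.1.le hβ.le) (by positivity)
        · positivity
        · positivity

set_option maxHeartbeats 1000000 in
lemma stmt5_lower (A₁ A₂ β γ : ℝ) (hA₁ : 0 < A₁) (hβ : 0 < β) (hγ : 0 < γ)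
    {n : ℕ} (hn : 1 ≤ n) (hL1 : 1 ≤ Real.log n) (hLγ : γ ≤ Real.log n)
    (hF2 : 2 ^ |A₂| * ((2/γ) ^ (2*|A₂|/β) * (Real.log n) ^ (2*|A₂|/β))
      ≤ ((2:ℝ) ^ (1/β) - 1) * Real.exp (Real.log n)) :
    ∀ h : ℝ, 0 < h →
      min ((2/γ) ^ (-(2*A₁/β))) 1 * (Real.log n) ^ (-(2*A₁/β)) ≤ H5 A₁ A₂ β γ n h := by
  set L := Real.log n with hLdef
  have hL0 : 0 < L := lt_of_lt_of_le one_pos hL1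
  have hn0 : (0:ℝ) < n := by exact_mod_cast hn
  have hexp : Real.exp L = n := Real.exp_log hn0
  set ρ : ℝ := ((1/γ) * L) ^ (1/β) with hρdef
  set R : ℝ := ((2/γ) * L) ^ (1/β) with hRdef
  clear_value L ρ R
  have hb1 : (0:ℝ) < (1/γ) * L := by positivity
  have hb2 : (0:ℝ) < (2/γ) * L := by positivity
  have hρ0 : 0 < ρ := hρdef ▸ Real.rpow_pos_of_pos hb1 _
  have hR0 : 0 < R := hRdef ▸ Real.rpow_pos_of_pos hb2 _
  have hb11 : (1:ℝ) ≤ (1/γ) * L := by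
    rw [one_div, inv_mul_eq_div, le_div_iff₀ hγ, one_mul]
    exact hLγ
  have hρ1 : 1 ≤ ρ :=
    calc (1:ℝ) = 1 ^ (1/β) := (Real.one_rpow _).symm
      _ ≤ ρ := by
          rw [hρdef]
          exact Real.rpow_le_rpow (by norm_num) hb11 (by positivity)
  have hρR : ρ ≤ R := by
    rw [hρdef, hRdef]
    apply Real.rpow_le_rpow hb1.le _ (by positivity)
    rw [show (2/γ) * L = 2 * ((1/γ) * L) by ring]
    linarith
  have hR1 : 1 ≤ R := hρ1.trans hρR
  have hQ : (1/β) * (2*A₁) = 2*A₁/β := by ring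
  have hδ0 : (0:ℝ) < (2:ℝ) ^ (1/β) - 1 := by
    have : (1:ℝ) < (2:ℝ) ^ (1/β) := by
      apply Real.one_lt_rpow_iff_of_pos (by norm_num) |>.mpr
      exact Or.inl ⟨by norm_num, by positivity⟩
    linarith
  -- value of R - ρ
  have hRρ : R = (2:ℝ) ^ (1/β) * ρ := by
    rw [hRdef, hρdef, ← Real.mul_rpow (by norm_num) hb1.le]
    congr 1; ring
  intro h hh
  have hvint : 0 ≤ ∫ ω in Set.Ioc (0:ℝ) (1/h), (ω ^ 2 + 1) ^ A₂ * Real.exp (2 * γ * ω ^ β) :=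
    setIntegral_nonneg measurableSet_Ioc (fun ω _ => by positivity)
  by_cases hc : 1/R ≤ h
  · -- bias dominates
    have hbias : (1/R) ^ (2*A₁) ≤ h ^ (2*A₁) :=
      Real.rpow_le_rpow (by positivity) hc (by positivity)
    have hkey : (1/R) ^ (2*A₁) = (2/γ) ^ (-(2*A₁/β)) * L ^ (-(2*A₁/β)) := by
      calc (1/R) ^ (2*A₁) = (R ^ (2*A₁))⁻¹ := by rw [one_div, Real.inv_rpow hR0.le]
        _ = (((2/γ) * L) ^ (2*A₁/β))⁻¹ := by
            rw [hRdef, ← Real.rpow_mul hb2.le, hQ]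
        _ = ((2/γ) * L) ^ (-(2*A₁/β)) := (Real.rpow_neg hb2.le _).symm
        _ = (2/γ) ^ (-(2*A₁/β)) * L ^ (-(2*A₁/β)) := Real.mul_rpow (by positivity) hL0.le
    calc min ((2/γ) ^ (-(2*A₁/β))) 1 * L ^ (-(2*A₁/β))
        ≤ (2/γ) ^ (-(2*A₁/β)) * L ^ (-(2*A₁/β)) := by
          apply mul_le_mul_of_nonneg_right (min_le_left _ _) (by positivity)
      _ = (1/R) ^ (2*A₁) := hkey.symm
      _ ≤ h ^ (2*A₁) := hbias
      _ ≤ H5 A₁ A₂ β γ n h := le_add_of_nonneg_right (by positivity)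
  · -- variance dominates
    push_neg at hc
    have hR1h : R ≤ 1/h := by
      rw [le_div_iff₀ hh]
      rw [lt_div_iff₀ hR0] at hc
      nlinarith
    have hsub : Set.Ioc ρ R ⊆ Set.Ioc 0 (1/h) :=
      fun x hx => ⟨hρ0.trans hx.1, hx.2.trans hR1h⟩
    have hmono : (∫ ω in Set.Ioc ρ R, (ω ^ 2 + 1) ^ A₂ * Real.exp (2 * γ * ω ^ β))
        ≤ ∫ ω in Set.Ioc (0:ℝ) (1/h), (ω ^ 2 + 1) ^ A₂ * Real.exp (2 * γ * ω ^ β) :=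
      setIntegral_mono_set ((g5_cont A₂ β γ hβ).integrableOn_Ioc)
        (ae_of_all _ (fun ω => by positivity)) (HasSubset.Subset.eventuallyLE hsub)
    have hρβ : 2 * γ * ρ ^ β = 2 * L := by
      rw [hρdef, ← Real.rpow_mul hb1.le, one_div_mul_cancel hβ.ne', Real.rpow_one]
      field_simp
    have hlow := g5_low A₂ β γ hβ hγ hρ0.le hρR
    rw [hρβ] at hlow
    -- (R^2+1)^|A₂| ≤ (R - ρ) * exp L
    have hRa : (R ^ 2 + 1) ^ |A₂| ≤ (R - ρ) * Real.exp L := by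
      have h2R : R ^ 2 + 1 ≤ 2 * R ^ 2 := by nlinarith
      have hRpow : ((R:ℝ) ^ 2) ^ |A₂| = R ^ (2*|A₂|) := by
        rw [← Real.rpow_natCast R 2, ← Real.rpow_mul hR0.le]
        norm_num
      have hR2a : R ^ (2*|A₂|) = (2/γ) ^ (2*|A₂|/β) * L ^ (2*|A₂|/β) := by
        rw [hRdef, ← Real.rpow_mul hb2.le, show (1/β) * (2*|A₂|) = 2*|A₂|/β by ring,
          Real.mul_rpow (by positivity) hL0.le]
      have hδρ : ((2:ℝ) ^ (1/β) - 1) ≤ R - ρ := by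
        rw [hRρ]
        nlinarith [mul_nonneg hδ0.le (sub_nonneg.mpr hρ1)]
      calc (R ^ 2 + 1) ^ |A₂| ≤ (2 * R ^ 2) ^ |A₂| :=
            Real.rpow_le_rpow (by positivity) h2R (abs_nonneg _)
        _ = 2 ^ |A₂| * ((2/γ) ^ (2*|A₂|/β) * L ^ (2*|A₂|/β)) := by
            rw [Real.mul_rpow (by norm_num) (by positivity), hRpow, hR2a]
        _ ≤ ((2:ℝ) ^ (1/β) - 1) * Real.exp L := hF2
        _ ≤ (R - ρ) * Real.exp L :=
            mul_le_mul_of_nonneg_right hδρ (Real.exp_pos _).le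
    have hone : 1 ≤ (n:ℝ)⁻¹ * ((R - ρ) * (((R ^ 2 + 1) ^ |A₂|)⁻¹ * Real.exp (2 * L))) := by
      have hX : (0:ℝ) < (R ^ 2 + 1) ^ |A₂| := by positivity
      have he2 : Real.exp (2 * L) = (n:ℝ) * n := by
        rw [show (2:ℝ) * L = L + L by ring, Real.exp_add, hexp]
      have hRa' : (R ^ 2 + 1) ^ |A₂| ≤ (R - ρ) * n := by rw [← hexp]; exact hRa
      have h1 : (n:ℝ) * ((R ^ 2 + 1) ^ |A₂|) ≤ (R - ρ) * Real.exp (2 * L) := by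
        calc (n:ℝ) * ((R ^ 2 + 1) ^ |A₂|) ≤ (n:ℝ) * ((R - ρ) * n) :=
              mul_le_mul_of_nonneg_left hRa' hn0.le
          _ = (R - ρ) * Real.exp (2 * L) := by rw [he2]; ring
      have hrw : (n:ℝ)⁻¹ * ((R - ρ) * (((R ^ 2 + 1) ^ |A₂|)⁻¹ * Real.exp (2 * L)))
          = ((R - ρ) * Real.exp (2 * L)) / ((n:ℝ) * ((R ^ 2 + 1) ^ |A₂|)) := by
        rw [div_eq_mul_inv, mul_inv]
        ring
      rw [hrw]
      exact (one_le_div (mul_pos hn0 hX)).mpr h1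
    have hvar : 1 ≤ (n:ℝ)⁻¹ *
        ∫ ω in Set.Ioc (0:ℝ) (1/h), (ω ^ 2 + 1) ^ A₂ * Real.exp (2 * γ * ω ^ β) := by
      refine hone.trans ?_
      apply mul_le_mul_of_nonneg_left (hlow.trans hmono) (by positivity)
    calc min ((2/γ) ^ (-(2*A₁/β))) 1 * L ^ (-(2*A₁/β))
        ≤ 1 * 1 := by
          apply mul_le_mul (min_le_right _ _) _ (by positivity) (by norm_num)
          exact Real.rpow_le_one_of_one_le_of_nonpos hL1 (neg_nonpos.mpr (by positivity))
      _ = 1 := by norm_num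
      _ ≤ (n:ℝ)⁻¹ * ∫ ω in Set.Ioc (0:ℝ) (1/h),
            (ω ^ 2 + 1) ^ A₂ * Real.exp (2 * γ * ω ^ β) := hvar
      _ ≤ H5 A₁ A₂ β γ n h := le_add_of_nonneg_left (Real.rpow_nonneg hh.le _)

set_option maxHeartbeats 1000000 in
lemma stmt5_upper (A₁ A₂ β γ : ℝ) (hA₁ : 0 < A₁) (hβ : 0 < β) (hγ : 0 < γ)
    {n : ℕ} (hn : 1 ≤ n) (hL1 : 1 ≤ Real.log n) (hL4γ : 4*γ ≤ Real.log n)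
    (hF1 : 2^|A₂| * ((4*γ)⁻¹)^((1+2*|A₂|)/β) * (Real.log n)^((1+2*|A₂|)/β + 2*A₁/β)
      ≤ Real.exp (2⁻¹ * Real.log n)) :
    ∃ h : ℝ, 0 < h ∧ H5 A₁ A₂ β γ n h ≤ ((4*γ)^(2*A₁/β) + 1) * (Real.log n)^(-(2*A₁/β)) := by
  set L := Real.log n with hLdef
  have hL0 : 0 < L := lt_of_lt_of_le one_pos hL1
  have hn0 : (0:ℝ) < n := by exact_mod_cast hn
  have hexp : Real.exp L = n := Real.exp_log hn0
  set T : ℝ := ((4*γ)⁻¹ * L) ^ (1/β) with hTdef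
  clear_value L T
  have hbT : (0:ℝ) < (4*γ)⁻¹ * L := by positivity
  have hT0 : 0 < T := hTdef ▸ Real.rpow_pos_of_pos hbT _
  have hbT1 : (1:ℝ) ≤ (4*γ)⁻¹ * L := by
    rw [inv_mul_eq_div, le_div_iff₀ (by positivity), one_mul]
    exact hL4γ
  have hT1 : 1 ≤ T :=
    calc (1:ℝ) = 1 ^ (1/β) := (Real.one_rpow _).symm
      _ ≤ T := by
          rw [hTdef]
          exact Real.rpow_le_rpow (by norm_num) hbT1 (by positivity)
  have hQ : (1/β) * (2*A₁) = 2*A₁/β := by ring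
  refine ⟨1/T, by positivity, ?_⟩
  have hkey : (1/T) ^ (2*A₁) = (4*γ)^(2*A₁/β) * L ^ (-(2*A₁/β)) := by
    calc (1/T) ^ (2*A₁) = (T ^ (2*A₁))⁻¹ := by rw [one_div, Real.inv_rpow hT0.le]
      _ = (((4*γ)⁻¹ * L) ^ (2*A₁/β))⁻¹ := by
          rw [hTdef, ← Real.rpow_mul hbT.le, hQ]
      _ = (((4*γ)⁻¹) ^ (2*A₁/β) * L ^ (2*A₁/β))⁻¹ := by
          rw [Real.mul_rpow (by positivity) hL0.le]
      _ = (4*γ)^(2*A₁/β) * L ^ (-(2*A₁/β)) := by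
          rw [mul_inv, Real.inv_rpow (by positivity), inv_inv, ← Real.rpow_neg hL0.le]
  have h2γT : 2 * γ * T ^ β = 2⁻¹ * L := by
    rw [hTdef, ← Real.rpow_mul hbT.le, one_div_mul_cancel hβ.ne', Real.rpow_one]
    field_simp
    ring
  have hup := g5_up A₂ β γ hβ hγ hT0.le
  rw [h2γT] at hup
  have hTbd : T * (T^2+1)^|A₂|
      ≤ 2^|A₂| * ((4*γ)⁻¹)^((1+2*|A₂|)/β) * L^((1+2*|A₂|)/β) := by
    have h2T : T^2 + 1 ≤ 2 * T^2 := by nlinarith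
    have hTpow : ((T:ℝ)^2) ^ |A₂| = T ^ (2*|A₂|) := by
      rw [← Real.rpow_natCast T 2, ← Real.rpow_mul hT0.le]
      norm_num
    have hT12 : T * T ^ (2*|A₂|) = T ^ (1 + 2*|A₂|) := by
      have := Real.rpow_add hT0 1 (2*|A₂|)
      rw [Real.rpow_one] at this
      exact this.symm
    have hTP : T ^ (1 + 2*|A₂|) = ((4*γ)⁻¹)^((1+2*|A₂|)/β) * L^((1+2*|A₂|)/β) := by
      rw [hTdef, ← Real.rpow_mul hbT.le, show (1/β) * (1+2*|A₂|) = (1+2*|A₂|)/β by ring,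
        Real.mul_rpow (by positivity) hL0.le]
    calc T * (T^2+1)^|A₂| ≤ T * (2*T^2)^|A₂| := by
          apply mul_le_mul_of_nonneg_left _ hT0.le
          exact Real.rpow_le_rpow (by positivity) h2T (abs_nonneg _)
      _ = 2^|A₂| * (T * T^(2*|A₂|)) := by
          rw [Real.mul_rpow (by norm_num) (by positivity), hTpow]
          ring
      _ = 2^|A₂| * T^(1+2*|A₂|) := by rw [hT12]
      _ = 2^|A₂| * ((4*γ)⁻¹)^((1+2*|A₂|)/β) * L^((1+2*|A₂|)/β) := by
          rw [hTP]; ring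
  have hX0 : (0:ℝ) < Real.exp (2⁻¹ * L) := Real.exp_pos _
  have hXX : Real.exp (2⁻¹ * L) * Real.exp (2⁻¹ * L) = Real.exp L := by
    rw [← Real.exp_add]; congr 1; ring
  have hvar : (n:ℝ)⁻¹ * (∫ ω in Set.Ioc (0:ℝ) T, (ω ^ 2 + 1) ^ A₂ * Real.exp (2 * γ * ω ^ β))
      ≤ L ^ (-(2*A₁/β)) := by
    calc (n:ℝ)⁻¹ * (∫ ω in Set.Ioc (0:ℝ) T, (ω ^ 2 + 1) ^ A₂ * Real.exp (2 * γ * ω ^ β))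
        ≤ (n:ℝ)⁻¹ * (T * ((T^2+1)^|A₂| * Real.exp (2⁻¹ * L))) :=
          mul_le_mul_of_nonneg_left hup (by positivity)
      _ = (T * (T^2+1)^|A₂|) * Real.exp (2⁻¹ * L)
            / (Real.exp (2⁻¹ * L) * Real.exp (2⁻¹ * L)) := by
          rw [hXX, ← hexp, div_eq_mul_inv]
          ring
      _ = (T * (T^2+1)^|A₂|) / Real.exp (2⁻¹ * L) := by
          rw [mul_div_mul_right _ _ hX0.ne']
      _ ≤ L ^ (-(2*A₁/β)) := by
          rw [div_le_iff₀ hX0]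
          have hsplit : L^((1+2*|A₂|)/β)
              = L^((1+2*|A₂|)/β + 2*A₁/β) * L^(-(2*A₁/β)) := by
            rw [← Real.rpow_add hL0]; congr 1; ring
          calc T * (T^2+1)^|A₂|
              ≤ 2^|A₂| * ((4*γ)⁻¹)^((1+2*|A₂|)/β) * L^((1+2*|A₂|)/β) := hTbd
            _ = (2^|A₂| * ((4*γ)⁻¹)^((1+2*|A₂|)/β) * L^((1+2*|A₂|)/β + 2*A₁/β))
                  * L^(-(2*A₁/β)) := by rw [hsplit]; ring
            _ ≤ Real.exp (2⁻¹ * L) * L^(-(2*A₁/β)) :=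
                mul_le_mul_of_nonneg_right hF1 (Real.rpow_nonneg hL0.le _)
            _ = L ^ (-(2*A₁/β)) * Real.exp (2⁻¹ * L) := by ring
  show (1/T) ^ (2*A₁) + (n:ℝ)⁻¹ * ∫ ω in Set.Ioc (0:ℝ) (1/(1/T)),
      (ω ^ 2 + 1) ^ A₂ * Real.exp (2 * γ * ω ^ β) ≤ _
  rw [one_div_one_div]
  calc (1/T) ^ (2*A₁) + (n:ℝ)⁻¹ * ∫ ω in Set.Ioc (0:ℝ) T,
        (ω ^ 2 + 1) ^ A₂ * Real.exp (2 * γ * ω ^ β)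
      ≤ (4*γ)^(2*A₁/β) * L ^ (-(2*A₁/β)) + L ^ (-(2*A₁/β)) :=
        add_le_add (le_of_eq hkey) hvar
    _ = ((4*γ)^(2*A₁/β) + 1) * L ^ (-(2*A₁/β)) := by ring

theorem stmt_5 (A₁ A₂ β γ : ℝ) (hA₁ : 0 < A₁) (hβ : 0 < β) (hγ : 0 < γ) :
    ∃ c C : ℝ, ∃ N : ℕ, 0 < c ∧ c ≤ C ∧ ∀ n : ℕ, N ≤ n →
      (∀ h : ℝ, 0 < h →
        c * (Real.log n) ^ (-(2 * A₁ / β)) ≤ H5 A₁ A₂ β γ n h) ∧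
      (∃ h : ℝ, 0 < h ∧ H5 A₁ A₂ β γ n h ≤ C * (Real.log n) ^ (-(2 * A₁ / β))) := by
  have K1pos : (0:ℝ) < 2^|A₂| * ((4*γ)⁻¹)^((1+2*|A₂|)/β) := by positivity
  have hδ0 : (0:ℝ) < (2:ℝ) ^ (1/β) - 1 := by
    have : (1:ℝ) < (2:ℝ) ^ (1/β) := by
      apply Real.one_lt_rpow_iff_of_pos (by norm_num) |>.mpr
      exact Or.inl ⟨by norm_num, by positivity⟩
    linarith
  have K2pos : (0:ℝ) < 2^|A₂| * (2/γ)^(2*|A₂|/β) := by positivity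
  have hev1 : ∀ᶠ x : ℝ in Filter.atTop,
      2^|A₂| * ((4*γ)⁻¹)^((1+2*|A₂|)/β) * x^((1+2*|A₂|)/β + 2*A₁/β)
        ≤ Real.exp (2⁻¹ * x) := by
    have h := (isLittleO_rpow_exp_pos_mul_atTop ((1+2*|A₂|)/β + 2*A₁/β)
      (show (0:ℝ) < 2⁻¹ by norm_num)).def (inv_pos.mpr K1pos)
    filter_upwards [h, Filter.eventually_ge_atTop (0:ℝ)] with x hx hx0
    rw [Real.norm_eq_abs, Real.norm_eq_abs, abs_of_nonneg (Real.rpow_nonneg hx0 _),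
      abs_of_nonneg (Real.exp_pos _).le] at hx
    calc 2^|A₂| * ((4*γ)⁻¹)^((1+2*|A₂|)/β) * x^((1+2*|A₂|)/β + 2*A₁/β)
        ≤ 2^|A₂| * ((4*γ)⁻¹)^((1+2*|A₂|)/β)
            * ((2^|A₂| * ((4*γ)⁻¹)^((1+2*|A₂|)/β))⁻¹ * Real.exp (2⁻¹ * x)) :=
          mul_le_mul_of_nonneg_left hx K1pos.le
      _ = Real.exp (2⁻¹ * x) := by field_simp
  have hev2 : ∀ᶠ x : ℝ in Filter.atTop,
      2^|A₂| * ((2/γ)^(2*|A₂|/β) * x^(2*|A₂|/β)) ≤ ((2:ℝ)^(1/β) - 1) * Real.exp x := by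
    have h := (isLittleO_rpow_exp_pos_mul_atTop (2*|A₂|/β)
      (show (0:ℝ) < 1 by norm_num)).def (mul_pos hδ0 (inv_pos.mpr K2pos))
    filter_upwards [h, Filter.eventually_ge_atTop (0:ℝ)] with x hx hx0
    rw [Real.norm_eq_abs, Real.norm_eq_abs, abs_of_nonneg (Real.rpow_nonneg hx0 _),
      abs_of_nonneg (Real.exp_pos _).le, one_mul] at hx
    calc 2^|A₂| * ((2/γ)^(2*|A₂|/β) * x^(2*|A₂|/β))
        = (2^|A₂| * (2/γ)^(2*|A₂|/β)) * x^(2*|A₂|/β) := by ring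
      _ ≤ (2^|A₂| * (2/γ)^(2*|A₂|/β))
            * (((2:ℝ)^(1/β) - 1) * (2^|A₂| * (2/γ)^(2*|A₂|/β))⁻¹ * Real.exp x) :=
          mul_le_mul_of_nonneg_left hx K2pos.le
      _ = ((2:ℝ)^(1/β) - 1) * Real.exp x := by field_simp
  have hev := hev1.and (hev2.and ((Filter.eventually_ge_atTop (1:ℝ)).and
    ((Filter.eventually_ge_atTop (4*γ)).and (Filter.eventually_ge_atTop γ))))
  have htend : Filter.Tendsto (fun n : ℕ => Real.log n) Filter.atTop Filter.atTop :=
    Real.tendsto_log_atTop.comp tendsto_natCast_atTop_atTop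
  have hevn := (htend.eventually hev).and (Filter.eventually_ge_atTop (1:ℕ))
  obtain ⟨N, hN⟩ := Filter.eventually_atTop.mp hevn
  refine ⟨min ((2/γ) ^ (-(2*A₁/β))) 1, (4*γ)^(2*A₁/β) + 1, N,
    lt_min (Real.rpow_pos_of_pos (by positivity) _) one_pos,
    le_trans (min_le_right _ _) (le_add_of_nonneg_left (Real.rpow_nonneg (by positivity) _)),
    ?_⟩
  intro n hn
  obtain ⟨⟨hf1, hf2, h1, h4γ, hγL⟩, hn1⟩ := hN n hn
  exact ⟨stmt5_lower A₁ A₂ β γ hA₁ hβ hγ hn1 h1 hγL hf2,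
    stmt5_upper A₁ A₂ β γ hA₁ hβ hγ hn1 h1 h4γ hf1⟩
end

section
/- Let f be a probability density on ℝ with ∫ |θ| f(θ) dθ < ∞ and Fourier transform f*(ω) = ∫ e^{iωθ} f(θ) dθ. Then for every t ∈ ℝ, ∫_ℝ sign(θ − t) f(θ) dθ = (2/π) · lim_{T→∞} ∫_0^T [cos(tω) · Im f*(ω) − sin(tω) · Re f*(ω)] / ω dω, where the integrand extends continuously to ω = 0; equivalently, the cumulative distribution function F(t) = ∫_{−∞}^t f(θ) dθ equals 1/2 minus one half of this limit. -/
open MeasureTheory Filter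

/-- Fourier transform `t*(ω) = ∫ e^{iωx} t(x) dx` of a real-valued function. -/
noncomputable def ft (t : ℝ → ℝ) (ω : ℝ) : ℂ :=
  ∫ x : ℝ, Complex.exp (Complex.I * (ω : ℂ) * (x : ℂ)) * (t x : ℂ)

open Set intervalIntegral

noncomputable def Si (y : ℝ) : ℝ := ∫ u in (0:ℝ)..y, Real.sin u / u

lemma sinc_abs_le_one (u : ℝ) : |Real.sin u / u| ≤ 1 := by
  rcases eq_or_ne u 0 with h | h
  · simp [h]
  · rw [abs_div, div_le_one (abs_pos.mpr h)]
    exact Real.abs_sin_le_abs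

lemma sinc_meas : Measurable fun u : ℝ => Real.sin u / u :=
  Real.measurable_sin.div measurable_id

lemma sinc_intervalIntegrable (a b : ℝ) :
    IntervalIntegrable (fun u : ℝ => Real.sin u / u) volume a b := by
  apply IntervalIntegrable.mono_fun (_root_.intervalIntegrable_const (μ := volume) (a := a) (b := b) (c := (1:ℝ)))
    sinc_meas.aestronglyMeasurable
  filter_upwards with u
  rw [Real.norm_eq_abs, norm_one]; exact sinc_abs_le_one u

lemma Si_odd (y : ℝ) : Si (-y) = - Si y := by
  have h : ∀ u : ℝ, Real.sin (-u) / (-u) = Real.sin u / u := by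
    intro u; rw [Real.sin_neg, neg_div_neg_eq]
  have : Si (-y) = ∫ u in (0:ℝ)..(-y), Real.sin (-u) / (-u) := by
    rw [Si]; congr 1; ext u; rw [h]
  rw [this, intervalIntegral.integral_comp_neg (fun u => Real.sin u / u)]
  rw [neg_neg, neg_zero, intervalIntegral.integral_symm]
  rfl

lemma Si_abs_le (y : ℝ) (hy : 0 ≤ y) : |Si y| ≤ y := by
  have := intervalIntegral.norm_integral_le_of_norm_le_const
    (C := 1) (f := fun u : ℝ => Real.sin u / u) (a := 0) (b := y) ?_
  · simpa [Real.norm_eq_abs, abs_of_nonneg hy, Si] using this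
  · intro u _; rw [Real.norm_eq_abs]; exact sinc_abs_le_one u

/-- The inner Laplace integral. -/
lemma laplace_sin (s T : ℝ) :
    ∫ x in (0:ℝ)..T, Real.exp (-(s*x)) * Real.sin x
      = (1 - Real.exp (-(s*T)) * (s * Real.sin T + Real.cos T)) / (1 + s^2) := by
  have hd : ∀ x : ℝ, HasDerivAt
      (fun x => -(Real.exp (-(s*x)) * (s * Real.sin x + Real.cos x)) / (1 + s^2))
      (Real.exp (-(s*x)) * Real.sin x) x := by
    intro x
    have h1 : HasDerivAt (fun x : ℝ => -(s*x)) (-s) x := by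
      have h := ((hasDerivAt_id x).const_mul s).neg
      rw [mul_one] at h
      exact h
    have h2 : HasDerivAt (fun x : ℝ => Real.exp (-(s*x))) (Real.exp (-(s*x)) * (-s)) x :=
      h1.exp
    have h3 : HasDerivAt (fun x : ℝ => s * Real.sin x + Real.cos x)
        (s * Real.cos x + (- Real.sin x)) x :=
      ((Real.hasDerivAt_sin x).const_mul s).add (Real.hasDerivAt_cos x)
    have h4 := ((h2.mul h3).neg).div_const (1 + s^2)
    refine h4.congr_deriv ?_
    have hs : 1 + s^2 ≠ 0 := by positivity
    rw [div_eq_iff hs]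
    ring
  have key := intervalIntegral.integral_eq_sub_of_hasDerivAt (a := (0:ℝ)) (b := T)
      (f := fun x => -(Real.exp (-(s*x)) * (s * Real.sin x + Real.cos x)) / (1 + s^2))
      (f' := fun x => Real.exp (-(s*x)) * Real.sin x)
      (fun x _ => hd x) ?_
  · rw [key]
    have hs : 1 + s^2 ≠ 0 := by positivity
    simp only [mul_zero, neg_zero, Real.exp_zero, Real.sin_zero, Real.cos_zero, zero_add, one_mul]
    rw [div_sub_div_same]
    congr 1
    ring
  · apply Continuous.intervalIntegrable
    continuity

lemma exp_inv_integral {x : ℝ} (hx : 0 < x) : ∫ s in Ioi (0:ℝ), Real.exp (-(x*s)) = 1/x := by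
  have h := integral_comp_mul_left_Ioi (fun u => Real.exp (-u)) 0 hx
  simp only [mul_zero, integral_exp_neg_Ioi, neg_zero, Real.exp_zero, smul_eq_mul, mul_one] at h
  rw [h, one_div]

lemma ratio_bound (s T : ℝ) :
    |Real.exp (-(s*T)) * (s * Real.sin T + Real.cos T) / (1 + s^2)| ≤ 2 * Real.exp (-(T*s)) := by
  have h1 : |s * Real.sin T + Real.cos T| ≤ |s| + 1 := by
    calc |s * Real.sin T + Real.cos T| ≤ |s * Real.sin T| + |Real.cos T| := abs_add_le _ _
    _ ≤ |s| * 1 + 1 := by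
        rw [abs_mul]
        gcongr
        · exact Real.abs_sin_le_one T
        · exact Real.abs_cos_le_one T
    _ = |s| + 1 := by ring
  have h2 : |s| + 1 ≤ 2 * (1 + s^2) := by nlinarith [sq_nonneg (2*|s| - 1), sq_abs s]
  have hs : (0:ℝ) < 1 + s^2 := by positivity
  rw [abs_div, abs_mul, abs_of_pos hs, div_le_iff₀ hs, Real.abs_exp, mul_comm s T]
  calc Real.exp (-(T*s)) * |s * Real.sin T + Real.cos T|
      ≤ Real.exp (-(T*s)) * (2 * (1 + s^2)) := by
        gcongr; exact h1.trans h2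
    _ = 2 * Real.exp (-(T*s)) * (1 + s^2) := by ring

lemma remainder_integrable {T : ℝ} (hT : 0 < T) :
    Integrable (fun s => Real.exp (-(s*T)) * (s * Real.sin T + Real.cos T) / (1 + s^2))
      (volume.restrict (Ioi (0:ℝ))) := by
  have hb : Integrable (fun s => 2 * Real.exp (-(T*s))) (volume.restrict (Ioi (0:ℝ))) := by
    have := (exp_neg_integrableOn_Ioi 0 hT).const_mul 2
    simpa [neg_mul] using this
  refine hb.mono' ?_ ?_
  · apply Continuous.aestronglyMeasurable
    apply Continuous.div
    · continuity
    · continuity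
    · intro s; positivity
  · filter_upwards with s
    rw [Real.norm_eq_abs]
    exact ratio_bound s T

lemma Si_eq_pi_div_two_sub {T : ℝ} (hT : 0 < T) :
    Si T = Real.pi/2 - ∫ s in Ioi (0:ℝ),
      Real.exp (-(s*T)) * (s * Real.sin T + Real.cos T) / (1 + s^2) := by
  have hmeas : AEStronglyMeasurable (fun p : ℝ × ℝ => Real.exp (-(p.1 * p.2)) * Real.sin p.1)
      ((volume.restrict (Ioc (0:ℝ) T)).prod (volume.restrict (Ioi (0:ℝ)))) := by
    apply Continuous.aestronglyMeasurable
    exact (Real.continuous_exp.comp (continuous_fst.mul continuous_snd).neg).mul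
      (Real.continuous_sin.comp continuous_fst)
  have hint : Integrable (fun p : ℝ × ℝ => Real.exp (-(p.1 * p.2)) * Real.sin p.1)
      ((volume.restrict (Ioc (0:ℝ) T)).prod (volume.restrict (Ioi (0:ℝ)))) := by
    rw [integrable_prod_iff hmeas]
    constructor
    · filter_upwards [ae_restrict_mem measurableSet_Ioc] with x hx
      have hx0 : 0 < x := hx.1
      have := (exp_neg_integrableOn_Ioi 0 hx0).mul_const (Real.sin x)
      simpa [neg_mul] using this
    · apply Integrable.mono' (g := fun _ : ℝ => (1:ℝ))
      · exact integrableOn_const (by simp [hT])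
      · exact hmeas.norm.integral_prod_right'
      · filter_upwards [ae_restrict_mem measurableSet_Ioc] with x hx
        have hx0 : 0 < x := hx.1
        have hcalc : ∫ s in Ioi (0:ℝ), ‖Real.exp (-(x*s)) * Real.sin x‖
            = |Real.sin x| / x := by
          simp_rw [norm_mul, Real.norm_eq_abs, Real.abs_exp]
          rw [MeasureTheory.integral_mul_const, exp_inv_integral hx0]
          ring
        rw [Real.norm_eq_abs]
        have hnn : (0:ℝ) ≤ ∫ s in Ioi (0:ℝ), ‖Real.exp (-(x*s)) * Real.sin x‖ :=
          integral_nonneg fun s => norm_nonneg _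
        rw [abs_of_nonneg hnn, hcalc, div_le_one hx0]
        exact (Real.abs_sin_le_abs).trans_eq (abs_of_pos hx0)
  have swap := integral_integral_swap (f := fun x s => Real.exp (-(x*s)) * Real.sin x) hint
  have step1 : Si T = ∫ x in Ioc (0:ℝ) T, Real.sin x / x := by
    rw [Si, intervalIntegral.integral_of_le hT.le]
  have step2 : ∀ x ∈ Ioc (0:ℝ) T,
      Real.sin x / x = ∫ s in Ioi (0:ℝ), Real.exp (-(x*s)) * Real.sin x := by
    intro x hx
    rw [MeasureTheory.integral_mul_const, exp_inv_integral hx.1]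
    ring
  have step3 : Si T = ∫ s in Ioi (0:ℝ), ∫ x in Ioc (0:ℝ) T,
      Real.exp (-(x*s)) * Real.sin x := by
    rw [step1, setIntegral_congr_fun measurableSet_Ioc step2]
    exact swap
  have step4 : ∀ s : ℝ, (∫ x in Ioc (0:ℝ) T, Real.exp (-(x*s)) * Real.sin x)
      = (1 + s^2)⁻¹ - Real.exp (-(s*T)) * (s * Real.sin T + Real.cos T) / (1 + s^2) := by
    intro s
    rw [← intervalIntegral.integral_of_le hT.le]
    rw [intervalIntegral.integral_congr (g := fun x => Real.exp (-(s*x)) * Real.sin x)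
      (fun x _ => by rw [mul_comm x s]), laplace_sin s T]
    have hs : (1:ℝ) + s^2 ≠ 0 := by positivity
    field_simp
  simp_rw [step3, step4]
  rw [integral_sub integrable_inv_one_add_sq.integrableOn (remainder_integrable hT)]
  congr 1
  simpa using integral_Ioi_inv_one_add_sq (i := 0)

lemma Si_dist_le {T : ℝ} (hT : 0 < T) : |Si T - Real.pi/2| ≤ 2 / T := by
  have hb : Integrable (fun s => 2 * Real.exp (-(T*s))) (volume.restrict (Ioi (0:ℝ))) := by
    have := (exp_neg_integrableOn_Ioi 0 hT).const_mul 2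
    simpa [neg_mul] using this
  have h := norm_integral_le_of_norm_le (f := fun s =>
      Real.exp (-(s*T)) * (s * Real.sin T + Real.cos T) / (1 + s^2))
      (μ := volume.restrict (Ioi (0:ℝ))) hb
      (Filter.Eventually.of_forall fun s => by rw [Real.norm_eq_abs]; exact ratio_bound s T)
  have hval : ∫ s in Ioi (0:ℝ), 2 * Real.exp (-(T*s)) = 2 / T := by
    rw [MeasureTheory.integral_const_mul, exp_inv_integral hT]
    ring
  rw [Si_eq_pi_div_two_sub hT]
  rw [hval] at h
  rw [show Real.pi/2 - _ - Real.pi/2 = -(∫ s in Ioi (0:ℝ),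
    Real.exp (-(s*T)) * (s * Real.sin T + Real.cos T) / (1 + s^2)) by ring, abs_neg]
  rw [Real.norm_eq_abs] at h
  exact h

lemma Si_tendsto : Tendsto Si atTop (nhds (Real.pi/2)) := by
  have h0 : Tendsto (fun T : ℝ => 2 / T) atTop (nhds 0) :=
    tendsto_const_nhds.div_atTop tendsto_id
  have h1 : Tendsto (fun T : ℝ => Si T - Real.pi/2) atTop (nhds 0) := by
    apply squeeze_zero_norm' _ h0
    filter_upwards [eventually_gt_atTop (0:ℝ)] with T hT
    rw [Real.norm_eq_abs]
    exact Si_dist_le hT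
  have := h1.add (tendsto_const_nhds (x := Real.pi/2))
  simpa using this

lemma Si_bound (y : ℝ) : |Si y| ≤ Real.pi/2 + 2 := by
  have hπ : (0:ℝ) ≤ Real.pi/2 := by positivity
  have key : ∀ z : ℝ, 0 ≤ z → |Si z| ≤ Real.pi/2 + 2 := by
    intro z hz
    rcases le_or_gt z 1 with h | h
    · calc |Si z| ≤ z := Si_abs_le z hz
        _ ≤ 1 := h
        _ ≤ Real.pi/2 + 2 := by linarith
    · have h0 : 0 < z := lt_trans one_pos h
      calc |Si z| = |Real.pi/2 + (Si z - Real.pi/2)| := by ring_nf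
        _ ≤ |Real.pi/2| + |Si z - Real.pi/2| := abs_add_le _ _
        _ ≤ Real.pi/2 + 2/z := by
            rw [abs_of_nonneg hπ]; gcongr; exact Si_dist_le h0
        _ ≤ Real.pi/2 + 2 := by
            have : 2/z ≤ 2 := by
              rw [div_le_iff₀ h0]; nlinarith
            linarith
  rcases le_or_gt 0 y with h | h
  · exact key y h
  · have := key (-y) (by linarith)
    rwa [Si_odd, abs_neg] at this

lemma Si_scale (a T : ℝ) : (∫ ω in (0:ℝ)..T, Real.sin (a*ω) / ω) = Si (a*T) := by
  rcases eq_or_ne a 0 with ha | ha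
  · simp [ha, Si]
  · have hpt : ∀ ω : ℝ, Real.sin (a*ω) / ω = a * ((fun u => Real.sin u / u) (ω * a)) := by
      intro ω
      rcases eq_or_ne ω 0 with h | h
      · simp [h]
      · field_simp [mul_comm ω a]
    rw [intervalIntegral.integral_congr (fun ω _ => hpt ω), intervalIntegral.integral_const_mul,
      intervalIntegral.integral_comp_mul_right (fun u => Real.sin u / u) ha]
    simp only [zero_mul, smul_eq_mul, mul_comm T a]
    rw [← mul_assoc, mul_inv_cancel₀ ha, one_mul]
    rfl

lemma Si_lim (a : ℝ) :
    Tendsto (fun T : ℝ => Si (a*T)) atTop (nhds (Real.pi/2 * Real.sign a)) := by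
  rcases lt_trichotomy a 0 with ha | ha | ha
  · rw [Real.sign_of_neg ha]
    have hpos : 0 < -a := by linarith
    have h1 : Tendsto (fun T : ℝ => (-a)*T) atTop atTop :=
      Tendsto.const_mul_atTop hpos tendsto_id
    have h2 := (Si_tendsto.comp h1).neg
    refine Tendsto.congr (fun T => ?_) (by convert h2 using 2; ring)
    show -Si ((-a)*T) = Si (a*T)
    rw [show (-a)*T = -(a*T) by ring, Si_odd, neg_neg]
  · simp [ha, Si]
  · rw [Real.sign_of_pos ha]
    have h1 : Tendsto (fun T : ℝ => a*T) atTop atTop :=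
      Tendsto.const_mul_atTop ha tendsto_id
    have := Si_tendsto.comp h1
    rw [mul_one]; exact this

variable {f : ℝ → ℝ}

lemma cos_mul_integrable (hf_int : Integrable f) (ω : ℝ) :
    Integrable (fun x => Real.cos (ω*x) * f x) := by
  apply Integrable.bdd_mul (c := 1) hf_int
  · exact (Real.continuous_cos.comp (continuous_const.mul continuous_id)).aestronglyMeasurable
  · exact Eventually.of_forall fun x => by rw [Real.norm_eq_abs]; exact Real.abs_cos_le_one _

lemma sin_mul_integrable (hf_int : Integrable f) (ω : ℝ) :
    Integrable (fun x => Real.sin (ω*x) * f x) := by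
  apply Integrable.bdd_mul (c := 1) hf_int
  · exact (Real.continuous_sin.comp (continuous_const.mul continuous_id)).aestronglyMeasurable
  · exact Eventually.of_forall fun x => by rw [Real.norm_eq_abs]; exact Real.abs_sin_le_one _

lemma ft_integrand_integrable (hf_int : Integrable f) (ω : ℝ) :
    Integrable (fun x : ℝ => Complex.exp (Complex.I * (ω:ℂ) * (x:ℂ)) * (f x : ℂ)) := by
  apply Integrable.mono' hf_int.norm
  · exact ((Complex.continuous_exp.comp ((continuous_const.mul Complex.continuous_ofReal)))
      |>.aestronglyMeasurable).mul
      (Complex.continuous_ofReal.comp_aestronglyMeasurable hf_int.aestronglyMeasurable)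
  · filter_upwards with x
    rw [norm_mul, Complex.norm_exp]
    simp [Complex.norm_real]

lemma ft_re_im (hf_int : Integrable f) (ω : ℝ) :
    (ft f ω).re = ∫ x, Real.cos (ω*x) * f x ∧
    (ft f ω).im = ∫ x, Real.sin (ω*x) * f x := by
  have hInt := ft_integrand_integrable hf_int ω
  have harg : ∀ x : ℝ, Complex.I * (ω:ℂ) * (x:ℂ) = ((ω*x : ℝ):ℂ) * Complex.I := by
    intro x; push_cast; ring
  have hre : ∀ x : ℝ, (Complex.exp (Complex.I * (ω:ℂ) * (x:ℂ)) * (f x : ℂ)).re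
      = Real.cos (ω*x) * f x := by
    intro x
    rw [harg x, Complex.exp_mul_I,
      show Complex.cos ((ω*x:ℝ):ℂ) = ((Real.cos (ω*x) : ℝ):ℂ) from (Complex.ofReal_cos _).symm,
      show Complex.sin ((ω*x:ℝ):ℂ) = ((Real.sin (ω*x) : ℝ):ℂ) from (Complex.ofReal_sin _).symm]
    simp only [add_mul, Complex.add_re, Complex.add_im, Complex.mul_re, Complex.mul_im,
      Complex.I_re, Complex.I_im, Complex.ofReal_re, Complex.ofReal_im]
    ring
  have him : ∀ x : ℝ, (Complex.exp (Complex.I * (ω:ℂ) * (x:ℂ)) * (f x : ℂ)).im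
      = Real.sin (ω*x) * f x := by
    intro x
    rw [harg x, Complex.exp_mul_I,
      show Complex.cos ((ω*x:ℝ):ℂ) = ((Real.cos (ω*x) : ℝ):ℂ) from (Complex.ofReal_cos _).symm,
      show Complex.sin ((ω*x:ℝ):ℂ) = ((Real.sin (ω*x) : ℝ):ℂ) from (Complex.ofReal_sin _).symm]
    simp only [add_mul, Complex.add_re, Complex.add_im, Complex.mul_re, Complex.mul_im,
      Complex.I_re, Complex.I_im, Complex.ofReal_re, Complex.ofReal_im]
    ring
  have h1 := integral_re (𝕜 := ℂ) hInt
  have h2 := integral_im (𝕜 := ℂ) hInt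
  simp only [RCLike.re_to_complex, RCLike.im_to_complex] at h1 h2
  constructor
  · rw [ft, ← h1]; simp only [hre]
  · rw [ft, ← h2]; simp only [him]

lemma Si_continuous : Continuous Si :=
  intervalIntegral.continuous_primitive sinc_intervalIntegrable 0

lemma sinc_scale_bound (a ω : ℝ) : |Real.sin (a*ω) / ω| ≤ |a| := by
  rcases eq_or_ne ω 0 with h | h
  · simp [h, abs_nonneg]
  · rw [abs_div, div_le_iff₀ (abs_pos.mpr h)]
    calc |Real.sin (a*ω)| ≤ |a*ω| := Real.abs_sin_le_abs
      _ = |a| * |ω| := abs_mul a ω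

lemma integrand_eq (hf_int : Integrable f) (t : ℝ) {ω : ℝ} (hω : ω ≠ 0) :
    (Real.cos (t*ω) * (ft f ω).im - Real.sin (t*ω) * (ft f ω).re) / ω
      = ∫ x, Real.sin ((x - t)*ω) / ω * f x := by
  obtain ⟨hre, him⟩ := ft_re_im hf_int ω
  rw [hre, him, ← MeasureTheory.integral_const_mul, ← MeasureTheory.integral_const_mul,
    ← integral_sub ((sin_mul_integrable hf_int ω).const_mul _)
      ((cos_mul_integrable hf_int ω).const_mul _), ← MeasureTheory.integral_div]
  congr 1
  ext x
  rw [show (x - t)*ω = ω*x - t*ω by ring, Real.sin_sub]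
  ring

lemma measurable_real_sign : Measurable Real.sign := by
  unfold Real.sign
  refine Measurable.ite ?_ measurable_const (Measurable.ite ?_ measurable_const measurable_const)
  · exact measurableSet_Iio
  · exact measurableSet_Ioi

lemma abs_real_sign (r : ℝ) : |Real.sign r| ≤ 1 := by
  rcases Real.sign_apply_eq r with h | h | h <;> rw [h] <;> norm_num

lemma sign_mul_integrable (hf_int : Integrable f) (t : ℝ) :
    Integrable (fun θ => Real.sign (θ - t) * f θ) := by
  apply Integrable.mono' hf_int.norm
  · exact ((measurable_real_sign.comp (measurable_id.sub_const t)).aestronglyMeasurable).mul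
      hf_int.aestronglyMeasurable
  · filter_upwards with θ
    rw [norm_mul, Real.norm_eq_abs, Real.norm_eq_abs (f θ)]
    calc |Real.sign (θ - t)| * |f θ| ≤ 1 * |f θ| :=
          mul_le_mul_of_nonneg_right (abs_real_sign _) (abs_nonneg _)
      _ = |f θ| := one_mul _

lemma sign_split (hf_int : Integrable f) (t : ℝ) :
    (∫ θ : ℝ, Real.sign (θ - t) * f θ) = (∫ x, f x) - 2 * ∫ θ in Iic t, f θ := by
  have hsf := sign_mul_integrable hf_int t
  have hIic := integral_add_compl (measurableSet_Iic (a := t)) hsf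
  have hIic' := integral_add_compl (measurableSet_Iic (a := t)) hf_int
  rw [compl_Iic] at hIic hIic'
  have h1 : ∫ θ in Ioi t, Real.sign (θ - t) * f θ = ∫ θ in Ioi t, f θ := by
    apply setIntegral_congr_fun measurableSet_Ioi
    intro θ hθ
    show Real.sign (θ - t) * f θ = f θ
    rw [Real.sign_of_pos (sub_pos.mpr hθ), one_mul]
  have h2 : ∫ θ in Iic t, Real.sign (θ - t) * f θ = - ∫ θ in Iic t, f θ := by
    rw [← MeasureTheory.integral_neg]
    apply setIntegral_congr_ae measurableSet_Iic
    filter_upwards [compl_mem_ae_iff.mpr (measure_singleton t)] with θ hθ hmem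
    have hne : θ ≠ t := hθ
    have : θ - t < 0 := sub_neg.mpr (lt_of_le_of_ne hmem hne)
    show Real.sign (θ - t) * f θ = - f θ
    rw [Real.sign_of_neg this, neg_one_mul]
  linarith

theorem stmt_8 (f : ℝ → ℝ)
    (hf_nonneg : ∀ x, 0 ≤ f x) (hf_int : Integrable f) (hf_one : (∫ x, f x) = 1)
    (hmom : Integrable (fun θ : ℝ => |θ| * f θ)) (t : ℝ) :
    ∃ L : ℝ,
      Tendsto
        (fun T : ℝ => ∫ ω in Set.Ioc (0 : ℝ) T,
          (Real.cos (t * ω) * (ft f ω).im - Real.sin (t * ω) * (ft f ω).re) / ω)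
        atTop (nhds L) ∧
      (∫ θ : ℝ, Real.sign (θ - t) * f θ) = (2 / Real.pi) * L ∧
      (∫ θ in Set.Iic t, f θ) = 1 / 2 - (1 / Real.pi) * L ∧
      ∃ c : ℝ,
        Tendsto
          (fun ω : ℝ => (Real.cos (t * ω) * (ft f ω).im - Real.sin (t * ω) * (ft f ω).re) / ω)
          (nhdsWithin 0 (Set.Ioi 0)) (nhds c) := by
  -- the bound function |x - t| * f x
  have habs : Integrable (fun x => |x - t| * f x) := by
    apply Integrable.mono' (hmom.add (hf_int.const_mul |t|))
    · exact ((continuous_abs.comp (continuous_id.sub continuous_const)).aestronglyMeasurable).mul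
        hf_int.aestronglyMeasurable
    · filter_upwards with x
      rw [Real.norm_eq_abs, abs_mul, abs_abs, abs_of_nonneg (hf_nonneg x)]
      have h1 : |x - t| ≤ |x| + |t| := abs_sub x t
      have h2 : 0 ≤ f x := hf_nonneg x
      simp only [Pi.add_apply]
      nlinarith
  -- Fubini for finite T
  have hswap : ∀ T : ℝ, 0 < T →
      (∫ ω in Ioc (0:ℝ) T, ∫ x, Real.sin ((x - t)*ω) / ω * f x)
        = ∫ x, Si ((x - t)*T) * f x := by
    intro T hT
    have hmeasF : AEStronglyMeasurable
        (fun p : ℝ × ℝ => Real.sin ((p.2 - t)*p.1)/p.1 * f p.2)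
        ((volume.restrict (Ioc 0 T)).prod volume) := by
      refine AEStronglyMeasurable.mul ?_ (hf_int.aestronglyMeasurable.comp_snd)
      exact ((Real.measurable_sin.comp
        (((measurable_snd.sub_const t)).mul measurable_fst)).div measurable_fst)
        |>.aestronglyMeasurable
    have hintF : Integrable (fun p : ℝ × ℝ => Real.sin ((p.2 - t)*p.1)/p.1 * f p.2)
        ((volume.restrict (Ioc 0 T)).prod volume) := by
      have hbound : Integrable (fun p : ℝ × ℝ => (1:ℝ) * (|p.2 - t| * f p.2))
          ((volume.restrict (Ioc 0 T)).prod volume) := by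
        exact Integrable.mul_prod (integrableOn_const (C := (1:ℝ)) (s := Ioc 0 T) (μ := volume) (by simp [hT])) habs
      apply Integrable.mono' (by simpa using hbound) hmeasF
      filter_upwards with p
      rw [norm_mul, Real.norm_eq_abs, Real.norm_eq_abs, abs_of_nonneg (hf_nonneg _)]
      exact mul_le_mul_of_nonneg_right (sinc_scale_bound _ _) (hf_nonneg _)
    have hs := integral_integral_swap
      (f := fun ω x => Real.sin ((x - t)*ω)/ω * f x) hintF
    rw [hs]
    congr 1
    ext x
    rw [MeasureTheory.integral_mul_const, ← intervalIntegral.integral_of_le hT.le, Si_scale (x - t) T]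
  -- main limit value
  set L : ℝ := Real.pi/2 * ∫ θ : ℝ, Real.sign (θ - t) * f θ with hL
  -- dominated convergence for T → ∞
  have hDCT : Tendsto (fun T : ℝ => ∫ x, Si ((x - t)*T) * f x) atTop (nhds L) := by
    have hlim : ∀ x : ℝ, Tendsto (fun T : ℝ => Si ((x - t)*T) * f x) atTop
        (nhds ((Real.pi/2 * Real.sign (x - t)) * f x)) :=
      fun x => (Si_lim (x - t)).mul_const (f x)
    have h := tendsto_integral_filter_of_dominated_convergence
      (F := fun (T : ℝ) (x : ℝ) => Si ((x - t)*T) * f x)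
      (f := fun x => (Real.pi/2 * Real.sign (x - t)) * f x)
      (bound := fun x => (Real.pi/2 + 2) * f x)
      (μ := volume) (l := atTop)
      (Eventually.of_forall fun T =>
        ((Si_continuous.comp ((continuous_id.sub continuous_const).mul
          continuous_const)).aestronglyMeasurable).mul hf_int.aestronglyMeasurable)
      (Eventually.of_forall fun T => Eventually.of_forall fun x => by
        rw [Real.norm_eq_abs, abs_mul, abs_of_nonneg (hf_nonneg x)]
        exact mul_le_mul_of_nonneg_right (Si_bound _) (hf_nonneg x))
      (hf_int.const_mul _)
      (Eventually.of_forall hlim)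
    have heq : (∫ x, (Real.pi/2 * Real.sign (x - t)) * f x) = L := by
      rw [hL]
      simp_rw [mul_assoc]
      rw [MeasureTheory.integral_const_mul]
    rwa [heq] at h
  refine ⟨L, ?_, ?_, ?_, ?_⟩
  · apply hDCT.congr'
    filter_upwards [eventually_gt_atTop (0:ℝ)] with T hT
    rw [← hswap T hT]
    symm
    apply setIntegral_congr_fun measurableSet_Ioc
    intro ω hω
    exact integrand_eq hf_int t (ne_of_gt hω.1)
  · rw [hL]
    field_simp
  · have hsplit := sign_split hf_int t
    rw [hf_one] at hsplit
    rw [hL]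
    have hπ : Real.pi ≠ 0 := Real.pi_ne_zero
    field_simp
    nlinarith [hsplit]
  · refine ⟨∫ x, (x - t) * f x, ?_⟩
    have hlim : ∀ x : ℝ, Tendsto (fun ω : ℝ => Real.sin ((x - t)*ω)/ω * f x)
        (nhdsWithin 0 (Ioi 0)) (nhds ((x - t) * f x)) := by
      intro x
      have hs : HasDerivAt (fun ω : ℝ => Real.sin ((x - t)*ω)) (x - t) 0 := by
        have := (Real.hasDerivAt_sin ((x - t)*0)).comp 0
          ((hasDerivAt_id 0).const_mul (x - t))
        simp at this; exact this
      have h2 := hasDerivAt_iff_tendsto_slope.mp hs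
      have hsub : Ioi (0:ℝ) ⊆ {(0:ℝ)}ᶜ := fun ω hω => ne_of_gt hω
      have h3 := h2.mono_left (nhdsWithin_mono 0 hsub)
      have h4 : ∀ ω : ℝ, slope (fun ω : ℝ => Real.sin ((x - t)*ω)) 0 ω
          = Real.sin ((x - t)*ω)/ω := by
        intro ω
        rw [slope_def_field]
        simp
      exact (h3.congr h4).mul_const (f x)
    have h := tendsto_integral_filter_of_dominated_convergence
      (F := fun (ω : ℝ) (x : ℝ) => Real.sin ((x - t)*ω)/ω * f x)
      (f := fun x => (x - t) * f x)
      (bound := fun x => |x - t| * f x)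
      (μ := volume) (l := nhdsWithin 0 (Ioi 0))
      (Eventually.of_forall fun ω =>
        (((Real.measurable_sin.comp ((measurable_id.sub_const t).mul_const ω)).div_const
          ω).aestronglyMeasurable).mul hf_int.aestronglyMeasurable)
      (Eventually.of_forall fun ω => Eventually.of_forall fun x => by
        rw [Real.norm_eq_abs, abs_mul, abs_of_nonneg (hf_nonneg x)]
        exact mul_le_mul_of_nonneg_right (sinc_scale_bound _ _) (hf_nonneg x))
      habs
      (Eventually.of_forall hlim)
    apply h.congr'
    filter_upwards [self_mem_nhdsWithin] with ω hω
    exact (integrand_eq hf_int t (ne_of_gt hω)).symm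
end

section
/- Let v ≥ 1, b > 0, C_v > 0 and define f(θ) = C_v b (1 + b²θ²)^{−v}. Let g be a probability density on ℝ and suppose there exists A > 0 with ∫_{−A}^{A} g(x) dx = C_A > 0. Then there exists a constant C_{bg} > 0, depending only on v, C_v, b, A and C_A, such that q(x) = ∫_ℝ g(x−θ) f(θ) dθ ≥ C_{bg} (x²+1)^{−v} for every x ∈ ℝ. -/
open MeasureTheory

theorem stmt_16 (v b Cv A CA : ℝ) (hv : 1 ≤ v) (hb : 0 < b) (hCv : 0 < Cv)
    (hA : 0 < A) (hCA : 0 < CA) :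
    ∃ Cbg : ℝ, 0 < Cbg ∧
      ∀ g : ℝ → ℝ, (∀ x, 0 ≤ g x) → Integrable g → (∫ x, g x) = 1 →
        (∫ x in Set.Icc (-A) A, g x) = CA →
        ∀ x : ℝ, Cbg * (x ^ 2 + 1) ^ (-v) ≤
          ∫ θ : ℝ, g (x - θ) * (Cv * b * (1 + b ^ 2 * θ ^ 2) ^ (-v)) := by
  set K : ℝ := 1 + 2 * b ^ 2 * A ^ 2 + 2 * b ^ 2 with hK
  have hKpos : 0 < K := by positivity
  have hKrpow : 0 < K ^ (-v) := Real.rpow_pos_of_pos hKpos _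
  refine ⟨Cv * b * CA * K ^ (-v), by positivity, ?_⟩
  intro g hg hgint hgtot hgA x
  set f : ℝ → ℝ := fun θ => Cv * b * (1 + b ^ 2 * θ ^ 2) ^ (-v) with hf
  have hfpos : ∀ θ, 0 < f θ := by
    intro θ
    have h1 : (0:ℝ) < 1 + b ^ 2 * θ ^ 2 := by positivity
    have := Real.rpow_pos_of_pos h1 (-v)
    positivity
  have hfbd : ∀ θ, f θ ≤ Cv * b := by
    intro θ
    have h1 : (1:ℝ) ≤ 1 + b ^ 2 * θ ^ 2 := by nlinarith [sq_nonneg (b * θ)]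
    have h2 : (1 + b ^ 2 * θ ^ 2) ^ (-v) ≤ 1 :=
      Real.rpow_le_one_of_one_le_of_nonpos h1 (by linarith)
    calc f θ = Cv * b * (1 + b ^ 2 * θ ^ 2) ^ (-v) := rfl
      _ ≤ Cv * b * 1 := by
          exact mul_le_mul_of_nonneg_left h2 (by positivity)
      _ = Cv * b := mul_one _
  have hfm : Measurable f := by
    rw [hf]; fun_prop
  have key : (∫ θ : ℝ, g (x - θ) * f θ) = ∫ y, g y * f (x - y) := by
    have h := MeasureTheory.integral_sub_left_eq_self (fun y => g y * f (x - y))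
      (volume : Measure ℝ) x
    rw [← h]
    congr 1
    funext θ
    simp [sub_sub_cancel]
  have hm2 : Measurable (fun y => f (x - y)) := hfm.comp (measurable_const.sub measurable_id)
  have hbd2 : ∀ y, ‖f (x - y)‖ ≤ Cv * b := fun y => by
    rw [Real.norm_eq_abs, abs_of_pos (hfpos _)]; exact hfbd _
  have hint : Integrable (fun y => g y * f (x - y)) := by
    have h := hgint.bdd_mul hm2.aestronglyMeasurable (c := Cv * b) (Filter.Eventually.of_forall hbd2)
    simpa [mul_comm] using h
  have hfnn : ∀ y, 0 ≤ g y * f (x - y) := fun y => mul_nonneg (hg y) (hfpos _).le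
  have hx1 : (0:ℝ) < (x ^ 2 + 1) ^ (-v) := Real.rpow_pos_of_pos (by positivity) _
  calc Cv * b * CA * K ^ (-v) * (x ^ 2 + 1) ^ (-v)
      = (∫ y in Set.Icc (-A) A, g y) * (Cv * b * (K ^ (-v) * (x ^ 2 + 1) ^ (-v))) := by
        rw [hgA]; ring
    _ = ∫ y in Set.Icc (-A) A, g y * (Cv * b * (K ^ (-v) * (x ^ 2 + 1) ^ (-v))) :=
        (integral_mul_const _ _).symm
    _ ≤ ∫ y in Set.Icc (-A) A, g y * f (x - y) := by
        apply setIntegral_mono_on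
        · exact hgint.integrableOn.mul_const _
        · exact hint.integrableOn
        · exact measurableSet_Icc
        · intro y hy
          apply mul_le_mul_of_nonneg_left _ (hg y)
          have h1 : (0:ℝ) < 1 + b ^ 2 * (x - y) ^ 2 := by positivity
          have hy2 : y ^ 2 ≤ A ^ 2 := by nlinarith [hy.1, hy.2]
          have h2 : 1 + b ^ 2 * (x - y) ^ 2 ≤ K * (x ^ 2 + 1) := by
            rw [hK]
            nlinarith [mul_nonneg (sq_nonneg b) (sq_nonneg (x + y)),
              mul_le_mul_of_nonneg_left hy2 (sq_nonneg b),
              mul_nonneg (sq_nonneg b) (sq_nonneg x), sq_nonneg x]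
          have h3 : (K * (x ^ 2 + 1)) ^ (-v) ≤ (1 + b ^ 2 * (x - y) ^ 2) ^ (-v) :=
            Real.rpow_le_rpow_of_nonpos h1 h2 (by linarith)
          have h4 : K ^ (-v) * (x ^ 2 + 1) ^ (-v) = (K * (x ^ 2 + 1)) ^ (-v) :=
            (Real.mul_rpow hKpos.le (by positivity)).symm
          rw [hf]
          dsimp only
          rw [h4]
          exact mul_le_mul_of_nonneg_left h3 (by positivity)
    _ ≤ ∫ y, g y * f (x - y) :=
        setIntegral_le_integral hint (Filter.Eventually.of_forall hfnn)
    _ = ∫ θ : ℝ, g (x - θ) * (Cv * b * (1 + b ^ 2 * θ ^ 2) ^ (-v)) := key.symm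
end

section
/- Let v ≥ 1 be an integer, let P_1 be continuous and non-vanishing on [1,2] and P_2 continuous on [3,4], and define the even function K : ℝ → [0,1] by K(ω) = (|ω|−1)^v P_1(|ω|) for 1 < |ω| < 2, K(ω) = 1 for 2 ≤ |ω| ≤ 3, K(ω) = (4−|ω|)^v P_2(|ω|) for 3 < |ω| < 4, and K(ω) = 0 otherwise; assume 0 ≤ K ≤ 1. Let A ∈ ℝ, G ≥ 0, ℵ ≥ 0, and l ∈ {1, 2}, and define J_l(h) = ∫_ℝ (ω²+1)^{−A} exp(−G|ω|^ℵ) K(ωh)^l dω for h > 0. Then, as h → 0⁺: (i) if G = 0, there exist constants 0 < c ≤ C and h_0 > 0 with c · h^{2A−1} ≤ J_l(h) ≤ C · h^{2A−1} for all 0 < h < h_0; (ii) if G > 0 and ℵ > 0, there exist constants 0 < c ≤ C and h_0 > 0 with c · h^{2A+ℵ(lv+1)−1} exp(−G h^{−ℵ}) ≤ J_l(h) ≤ C · h^{2A+ℵ(lv+1)−1} exp(−G h^{−ℵ}) for all 0 < h < h_0. -/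
open MeasureTheory Real

lemma aux_pow_mul_exp_neg_le (k : ℕ) {e x : ℝ} (he : 0 < e) (hx : 0 ≤ x) :
    x ^ k * Real.exp (-(e * x)) ≤ (Nat.factorial k : ℝ) / e ^ k := by
  have h := Real.pow_div_factorial_le_exp (x := e * x) (by positivity) k
  have hk : (0:ℝ) < Nat.factorial k := by positivity
  rw [div_le_iff₀ hk] at h
  rw [Real.exp_neg, mul_pow] at *
  rw [mul_inv_le_iff₀' (Real.exp_pos _), ← mul_div_assoc, le_div_iff₀ (pow_pos he k)]
  nlinarith [Real.exp_pos (e*x), pow_nonneg hx k, pow_pos he k]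

lemma aux_rpow_bracket {a b x A : ℝ} (ha : 0 < a) (hax : a ≤ x) (hxb : x ≤ b) :
    min (a ^ (-A)) (b ^ (-A)) ≤ x ^ (-A) ∧
      x ^ (-A) ≤ max (a ^ (-A)) (b ^ (-A)) := by
  have hx : 0 < x := lt_of_lt_of_le ha hax
  rcases le_total 0 (-A) with hA | hA
  · constructor
    · exact le_trans (min_le_left _ _) (Real.rpow_le_rpow ha.le hax hA)
    · exact le_trans (Real.rpow_le_rpow hx.le hxb hA) (le_max_right _ _)
  · constructor
    · exact le_trans (min_le_right _ _) (Real.rpow_le_rpow_of_nonpos hx hxb hA)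
    · exact le_trans (Real.rpow_le_rpow_of_nonpos ha hax hA) (le_max_left _ _)

lemma aux_rpow_lower {al t : ℝ} (hal : 0 < al) (ht0 : 0 ≤ t) (ht1 : t ≤ 1) :
    1 + al / 2 * t ≤ (1 + t) ^ al := by
  have h1t : (0:ℝ) < 1 + t := by linarith
  have h7 : (0:ℝ) < 1 - t/2 := by linarith
  have hlog : t / 2 ≤ Real.log (1 + t) := by
    rw [Real.le_log_iff_exp_le h1t]
    have h2 : 1 - t/2 ≤ Real.exp (-(t/2)) := Real.one_sub_le_exp_neg (t/2)
    have h6 : Real.exp (t/2) * (1 - t/2) ≤ 1 := by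
      have := mul_le_mul_of_nonneg_left h2 (Real.exp_pos (t/2)).le
      rwa [← Real.exp_add, add_neg_cancel, Real.exp_zero] at this
    have h8 : Real.exp (t/2) ≤ 1/(1-t/2) := by
      rw [le_div_iff₀ h7]; linarith
    calc Real.exp (t/2) ≤ 1/(1-t/2) := h8
      _ ≤ 1 + t := by rw [div_le_iff₀ h7]; nlinarith
  rw [Real.rpow_def_of_pos h1t]
  calc 1 + al / 2 * t = al * (t/2) + 1 := by ring
    _ ≤ al * Real.log (1+t) + 1 := by nlinarith
    _ ≤ Real.exp (al * Real.log (1+t)) := Real.add_one_le_exp _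
    _ = Real.exp (Real.log (1+t) * al) := by ring_nf

lemma aux_rpow_upper {al t : ℝ} (hal : 0 ≤ al) (ht0 : 0 ≤ t) (ht1 : t ≤ 1) :
    (1 + t) ^ al ≤ 1 + al * Real.exp al * t := by
  have h1t : (0:ℝ) < 1 + t := by linarith
  have hlog : Real.log (1 + t) ≤ t := by
    have := Real.log_le_sub_one_of_pos h1t; linarith
  have h1 : (1+t) ^ al ≤ Real.exp (al * t) := by
    rw [Real.rpow_def_of_pos h1t, mul_comm]
    exact Real.exp_le_exp.mpr (mul_le_mul_of_nonneg_left hlog hal)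
  have hh : Real.exp (al*t) * (1 - al*t) ≤ 1 := by
    have := mul_le_mul_of_nonneg_left (Real.one_sub_le_exp_neg (al*t)) (Real.exp_pos (al*t)).le
    rwa [← Real.exp_add, add_neg_cancel, Real.exp_zero] at this
  have h2 : Real.exp (al * t) ≤ 1 + (al * t) * Real.exp (al * t) := by nlinarith
  have h3 : (al * t) * Real.exp (al * t) ≤ (al * Real.exp al) * t := by
    have h4 : Real.exp (al * t) ≤ Real.exp al := by
      apply Real.exp_le_exp.mpr; nlinarith
    nlinarith [mul_nonneg hal ht0, Real.exp_pos (al*t)]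
  linarith

lemma aux_exp_integral {a b c d : ℝ} (hab : a ≤ b) (hc : c ≠ 0) :
    ∫ x in Set.Ioo a b, Real.exp (c * x + d) =
      (Real.exp (c * b + d) - Real.exp (c * a + d)) / c := by
  have hder : ∀ x ∈ Set.uIcc a b,
      HasDerivAt (fun x => Real.exp (c * x + d) / c) (Real.exp (c * x + d)) x := by
    intro x _
    have h1 : HasDerivAt (fun x : ℝ => c * x + d) c x := by
      simpa using ((hasDerivAt_id x).const_mul c).add_const d
    have h3 := (h1.exp).div_const c
    simpa [mul_div_cancel_right₀ _ hc] using h3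
  have hint : IntervalIntegrable (fun x => Real.exp (c * x + d)) volume a b :=
    (((continuous_const.mul continuous_id).add continuous_const).rexp).intervalIntegrable a b
  have heq := intervalIntegral.integral_eq_sub_of_hasDerivAt hder hint
  rw [intervalIntegral.integral_of_le hab, MeasureTheory.integral_Ioc_eq_integral_Ioo] at heq
  rw [heq]; ring

lemma aux_set_eq {h a b : ℝ} (hh : 0 < h) (ha : 0 < a) :
    {ω : ℝ | a < |ω * h| ∧ |ω * h| < b} =
      Set.Ioo (-(b/h)) (-(a/h)) ∪ Set.Ioo (a/h) (b/h) := by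
  ext ω
  have habs : |ω * h| = |ω| * h := by rw [abs_mul, abs_of_pos hh]
  simp only [Set.mem_setOf_eq, Set.mem_union, Set.mem_Ioo, habs]
  constructor
  · rintro ⟨h1, h2⟩
    rcases le_or_gt 0 ω with hω | hω
    · right
      rw [abs_of_nonneg hω] at h1 h2
      exact ⟨(div_lt_iff₀ hh).mpr (by linarith), (lt_div_iff₀ hh).mpr (by linarith)⟩
    · left
      rw [abs_of_neg hω] at h1 h2
      constructor
      · have : -ω < b / h := (lt_div_iff₀ hh).mpr (by linarith); linarith
      · have : a / h < -ω := (div_lt_iff₀ hh).mpr (by linarith); linarith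
  · rintro (⟨h1, h2⟩ | ⟨h1, h2⟩)
    · have hω : ω < 0 := by
        have h0 : 0 < a/h := by positivity
        linarith
      rw [abs_of_neg hω]
      have e1 : a / h < -ω := by linarith
      have e2 : -ω < b / h := by linarith
      exact ⟨by have := (div_lt_iff₀ hh).mp e1; linarith, by have := (lt_div_iff₀ hh).mp e2; linarith⟩
    · have hω : 0 < ω := lt_of_le_of_lt (by positivity : (0:ℝ) ≤ a/h) h1
      rw [abs_of_pos hω]
      exact ⟨by have := (div_lt_iff₀ hh).mp h1; linarith, by have := (lt_div_iff₀ hh).mp h2; linarith⟩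

lemma aux_union_integral {h μ D : ℝ} (hh : 0 < h) (hμ : 0 < μ) (hD : 0 ≤ D) :
    ∫ x in Set.Ioo (-(2/h)) (-(1/h)) ∪ Set.Ioo (1/h) (2/h),
      D * Real.exp (-(μ * (|x| * h - 1))) ≤ D * (2/(μ*h)) := by
  have h1h : (0:ℝ) < 1/h := by positivity
  have hdisj : Disjoint (Set.Ioo (-(2/h) : ℝ) (-(1/h))) (Set.Ioo (1/h) (2/h)) := by
    apply Set.disjoint_left.mpr; rintro x ⟨_, hx2⟩ ⟨hx3, _⟩; linarith
  have hcont : Continuous fun x : ℝ => D * Real.exp (-(μ * (|x| * h - 1))) := by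
    apply continuous_const.mul
    apply Real.continuous_exp.comp
    fun_prop
  have int1 : IntegrableOn (fun x : ℝ => D * Real.exp (-(μ * (|x| * h - 1))))
      (Set.Ioo (-(2/h)) (-(1/h))) := by
    exact (hcont.integrableOn_Icc (a := -(2/h)) (b := -(1/h))).mono_set Set.Ioo_subset_Icc_self
  have int2 : IntegrableOn (fun x : ℝ => D * Real.exp (-(μ * (|x| * h - 1))))
      (Set.Ioo (1/h) (2/h)) := by
    exact (hcont.integrableOn_Icc (a := 1/h) (b := 2/h)).mono_set Set.Ioo_subset_Icc_self
  rw [MeasureTheory.setIntegral_union hdisj measurableSet_Ioo int1 int2]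
  have hc1 : μ * h ≠ 0 := by positivity
  have h12 : (1:ℝ)/h ≤ 2/h := by gcongr; norm_num
  have e1 : ∫ x in Set.Ioo (-(2/h)) (-(1/h)), D * Real.exp (-(μ * (|x| * h - 1)))
      = D * ((1 - Real.exp (-μ))/(μ*h)) := by
    rw [MeasureTheory.integral_const_mul]
    congr 1
    have ec : Set.EqOn (fun x : ℝ => Real.exp (-(μ * (|x| * h - 1))))
        (fun x : ℝ => Real.exp ((μ*h) * x + μ)) (Set.Ioo (-(2/h)) (-(1/h))) := by
      intro x hx
      have hx0 : x < 0 := lt_of_lt_of_le hx.2 (by linarith)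
      simp only
      rw [abs_of_neg hx0]; ring_nf
    rw [MeasureTheory.setIntegral_congr_fun measurableSet_Ioo ec,
      aux_exp_integral (by linarith) hc1]
    have q1 : μ * h * (-(1/h)) + μ = 0 := by field_simp; ring
    have q2 : μ * h * (-(2/h)) + μ = -μ := by field_simp; ring
    rw [q1, q2, Real.exp_zero]
  have e2 : ∫ x in Set.Ioo (1/h) (2/h), D * Real.exp (-(μ * (|x| * h - 1)))
      = D * ((1 - Real.exp (-μ))/(μ*h)) := by
    rw [MeasureTheory.integral_const_mul]
    congr 1
    have ec : Set.EqOn (fun x : ℝ => Real.exp (-(μ * (|x| * h - 1))))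
        (fun x : ℝ => Real.exp ((-(μ*h)) * x + μ)) (Set.Ioo (1/h) (2/h)) := by
      intro x hx
      have hx0 : 0 < x := lt_trans h1h hx.1
      simp only
      rw [abs_of_pos hx0]; ring_nf
    rw [MeasureTheory.setIntegral_congr_fun measurableSet_Ioo ec,
      aux_exp_integral (by linarith) (by simpa using hc1)]
    have q1 : -(μ * h) * (1/h) + μ = 0 := by field_simp; ring
    have q2 : -(μ * h) * (2/h) + μ = -μ := by field_simp; ring
    rw [q1, q2, Real.exp_zero]
    ring
  rw [e1, e2]
  have h0 : (0:ℝ) < μ * h := by positivity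
  have hb : (1 - Real.exp (-μ))/(μ*h) ≤ 1/(μ*h) :=
    (div_le_div_iff_of_pos_right h0).mpr (by linarith [Real.exp_pos (-μ)])
  have hmm := mul_le_mul_of_nonneg_left hb hD
  have e3 : D * (2/(μ*h)) = D*(1/(μ*h)) + D*(1/(μ*h)) := by ring
  linarith

lemma aux_w_bounds (A : ℝ) : ∃ ca CA : ℝ, 0 < ca ∧ ca ≤ CA ∧
    ∀ h ω : ℝ, 0 < h → h ≤ 1 → 1/h ≤ |ω| → |ω| ≤ 4/h →
      ca * h ^ (2*A) ≤ ((ω:ℝ)^2+1) ^ (-A) ∧ ((ω:ℝ)^2+1) ^ (-A) ≤ CA * h ^ (2*A) := by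
  refine ⟨min 1 ((17:ℝ)^(-A)), max 1 ((17:ℝ)^(-A)),
    lt_min one_pos (Real.rpow_pos_of_pos (by norm_num) _),
    le_trans (min_le_left _ _) (le_max_left _ _), fun h ω hh hh1 hlo hhi => ?_⟩
  have hh2 : (0:ℝ) < h^2 := by positivity
  have ha : (0:ℝ) < 1/h^2 := by positivity
  have habs2 : |ω|^2 = ω^2 := sq_abs ω
  have hx1 : 1/h^2 ≤ ω^2 + 1 := by
    have h1 : (1/h)^2 ≤ |ω|^2 := pow_le_pow_left₀ (by positivity) hlo 2
    rw [div_pow, one_pow] at h1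
    rw [habs2] at h1; linarith
  have hx2 : ω^2 + 1 ≤ 17/h^2 := by
    have h1 : |ω|^2 ≤ (4/h)^2 := pow_le_pow_left₀ (abs_nonneg ω) hhi 2
    rw [div_pow] at h1
    have h2 : (1:ℝ) ≤ 1/h^2 := by
      rw [le_div_iff₀ hh2]; nlinarith
    rw [habs2] at h1
    have : (4:ℝ)^2 = 16 := by norm_num
    rw [this] at h1
    have : (16:ℝ)/h^2 + 1/h^2 = 17/h^2 := by ring
    linarith
  obtain ⟨hmin, hmax⟩ := aux_rpow_bracket ha hx1 hx2
  have e0 : ((h^2 : ℝ)) ^ A = h ^ (2*A) := by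
    rw [← Real.rpow_natCast h 2, ← Real.rpow_mul hh.le]; norm_num
  have e1 : ((1/h^2 : ℝ)) ^ (-A) = h ^ (2*A) := by
    rw [one_div, Real.inv_rpow hh2.le, Real.rpow_neg hh2.le, inv_inv, e0]
  have e2 : ((17/h^2 : ℝ)) ^ (-A) = 17^(-A) * h^(2*A) := by
    rw [Real.div_rpow (by norm_num) hh2.le, div_eq_mul_inv, Real.rpow_neg hh2.le, inv_inv, e0]
  rw [e1, e2] at hmin hmax
  have hX : (0:ℝ) ≤ h ^ (2*A) := Real.rpow_nonneg hh.le _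
  constructor
  · refine le_trans (le_min ?_ ?_) hmin
    · exact mul_le_of_le_one_left hX (min_le_left _ _)
    · exact mul_le_mul_of_nonneg_right (min_le_right _ _) hX
  · refine le_trans hmax (max_le ?_ ?_)
    · exact le_mul_of_one_le_left hX (le_max_left _ _)
    · exact mul_le_mul_of_nonneg_right (le_max_right _ _) hX

lemma aux_integrable (v : ℕ) (P₁ P₂ K : ℝ → ℝ)
    (hP₁cont : ContinuousOn P₁ (Set.Icc 1 2))
    (hP₂cont : ContinuousOn P₂ (Set.Icc 3 4))
    (hK₁ : ∀ ω : ℝ, 1 < |ω| → |ω| < 2 → K ω = (|ω| - 1) ^ v * P₁ |ω|)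
    (hK₂ : ∀ ω : ℝ, 2 ≤ |ω| → |ω| ≤ 3 → K ω = 1)
    (hK₃ : ∀ ω : ℝ, 3 < |ω| → |ω| < 4 → K ω = (4 - |ω|) ^ v * P₂ |ω|)
    (hK₀ : ∀ ω : ℝ, (|ω| ≤ 1 ∨ 4 ≤ |ω|) → K ω = 0)
    (A G al : ℝ) (hal : 0 ≤ al) (l : ℕ) (hl1 : 1 ≤ l) {h : ℝ} (hh : 0 < h) :
    Integrable (fun ω : ℝ => ((ω:ℝ)^2+1)^(-A) * Real.exp (-G*|ω|^al) * K (ω*h)^l) := by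
  set φ : ℝ → ℝ := fun ω => ((ω:ℝ)^2+1)^(-A) * Real.exp (-G*|ω|^al) with hφdef
  have hφ : Continuous φ := by
    apply Continuous.mul
    · apply Continuous.rpow_const (by fun_prop)
      intro x; left; positivity
    · apply Real.continuous_exp.comp
      exact continuous_const.mul (continuous_abs.rpow_const (fun x => Or.inr hal))
  set c : ℝ → ℝ := fun ω => |ω * h| with hcdef
  have hc : Continuous c := continuous_abs.comp (continuous_id.mul continuous_const)
  set Fh : ℝ → ℝ := fun ω => φ ω * K (ω*h)^l with hFdef
  set S₁ := c ⁻¹' Set.Ioo 1 2 with hS₁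
  set S₂ := c ⁻¹' Set.Icc 2 3 with hS₂
  set S₃ := c ⁻¹' Set.Ioo 3 4 with hS₃
  have mS₁ : MeasurableSet S₁ := (isOpen_Ioo.preimage hc).measurableSet
  have mS₂ : MeasurableSet S₂ := (isClosed_Icc.preimage hc).measurableSet
  have mS₃ : MeasurableSet S₃ := (isOpen_Ioo.preimage hc).measurableSet
  have hl0 : l ≠ 0 := by omega
  have hdec : Fh = fun ω => S₁.indicator Fh ω + S₂.indicator Fh ω + S₃.indicator Fh ω := by
    funext ω
    have hm1 : ω ∈ S₁ ↔ (1 < |ω*h| ∧ |ω*h| < 2) := Iff.rfl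
    have hm2 : ω ∈ S₂ ↔ (2 ≤ |ω*h| ∧ |ω*h| ≤ 3) := Iff.rfl
    have hm3 : ω ∈ S₃ ↔ (3 < |ω*h| ∧ |ω*h| < 4) := Iff.rfl
    rcases le_or_gt (|ω*h|) 1 with c1 | c1
    · have hK : K (ω*h) = 0 := hK₀ _ (Or.inl c1)
      have : Fh ω = 0 := by simp [hFdef, hK, zero_pow hl0]
      rw [Set.indicator_of_notMem (by rw [hm1]; push_neg; intro hc'; linarith),
        Set.indicator_of_notMem (by rw [hm2]; push_neg; intro hc'; linarith),
        Set.indicator_of_notMem (by rw [hm3]; push_neg; intro hc'; linarith), this]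
      ring
    · rcases lt_or_ge (|ω*h|) 2 with c2 | c2
      · rw [Set.indicator_of_mem (hm1.mpr ⟨c1, c2⟩),
          Set.indicator_of_notMem (by rw [hm2]; push_neg; intro hc'; linarith),
          Set.indicator_of_notMem (by rw [hm3]; push_neg; intro hc'; linarith)]
        ring
      · rcases le_or_gt (|ω*h|) 3 with c3 | c3
        · rw [Set.indicator_of_notMem (by rw [hm1]; push_neg; intro hc'; linarith),
            Set.indicator_of_mem (hm2.mpr ⟨c2, c3⟩),
            Set.indicator_of_notMem (by rw [hm3]; push_neg; intro hc'; linarith)]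
          ring
        · rcases lt_or_ge (|ω*h|) 4 with c4 | c4
          · rw [Set.indicator_of_notMem (by rw [hm1]; push_neg; intro hc'; linarith),
              Set.indicator_of_notMem (by rw [hm2]; push_neg; intro hc'; linarith),
              Set.indicator_of_mem (hm3.mpr ⟨c3, c4⟩)]
            ring
          · have hK : K (ω*h) = 0 := hK₀ _ (Or.inr c4)
            have : Fh ω = 0 := by simp [hFdef, hK, zero_pow hl0]
            rw [Set.indicator_of_notMem (by rw [hm1]; push_neg; intro hc'; linarith),
              Set.indicator_of_notMem (by rw [hm2]; push_neg; intro hc'; linarith),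
              Set.indicator_of_notMem (by rw [hm3]; push_neg; intro hc'; linarith), this]
            ring
  have habsle : ∀ {b : ℝ} (ω : ℝ), 0 < b → |ω * h| ≤ b → ω ∈ Set.Icc (-(b/h)) (b/h) := by
    intro b ω hb hle
    rw [abs_mul, abs_of_pos hh] at hle
    have : |ω| ≤ b/h := (le_div_iff₀ hh).mpr hle
    exact abs_le.mp this |> fun ⟨x, y⟩ => ⟨x, y⟩
  -- IntegrableOn Fh S₁
  have int1 : IntegrableOn Fh S₁ := by
    set g₁ : ℝ → ℝ := fun ω => φ ω * ((|ω*h| - 1)^v * P₁ |ω*h|)^l with hg₁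
    set T₁ := c ⁻¹' Set.Icc 1 2 with hT₁
    have hT₁cpt : IsCompact T₁ := by
      apply IsCompact.of_isClosed_subset (isCompact_Icc (a := -(2/h)) (b := (2/h)))
        (isClosed_Icc.preimage hc)
      intro ω hω
      exact habsle ω (by norm_num) hω.2
    have hcont : ContinuousOn g₁ T₁ := by
      apply (hφ.continuousOn).mul
      apply ContinuousOn.pow
      apply ContinuousOn.mul
      · exact ((hc.sub continuous_const).pow v).continuousOn
      · exact hP₁cont.comp hc.continuousOn (Set.mapsTo_preimage c _)
    have hint : IntegrableOn g₁ T₁ := hcont.integrableOn_compact hT₁cpt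
    have hsub : S₁ ⊆ T₁ := Set.preimage_mono Set.Ioo_subset_Icc_self
    refine (hint.mono_set hsub).congr_fun ?_ mS₁
    intro ω hω
    have := hK₁ (ω*h) hω.1 hω.2
    simp only [hg₁, hFdef, this]
  have int2 : IntegrableOn Fh S₂ := by
    have hint : IntegrableOn φ (Set.Icc (-(3/h)) (3/h)) := hφ.integrableOn_Icc
    have hsub : S₂ ⊆ Set.Icc (-(3/h)) (3/h) := fun ω hω => habsle ω (by norm_num) hω.2
    refine (hint.mono_set hsub).congr_fun ?_ mS₂
    intro ω hω
    have := hK₂ (ω*h) hω.1 hω.2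
    simp only [hFdef, this, one_pow, mul_one]
  have int3 : IntegrableOn Fh S₃ := by
    set g₃ : ℝ → ℝ := fun ω => φ ω * ((4 - |ω*h|)^v * P₂ |ω*h|)^l with hg₃
    set T₃ := c ⁻¹' Set.Icc 3 4 with hT₃
    have hT₃cpt : IsCompact T₃ := by
      apply IsCompact.of_isClosed_subset (isCompact_Icc (a := -(4/h)) (b := (4/h)))
        (isClosed_Icc.preimage hc)
      intro ω hω
      exact habsle ω (by norm_num) hω.2
    have hcont : ContinuousOn g₃ T₃ := by
      apply (hφ.continuousOn).mul
      apply ContinuousOn.pow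
      apply ContinuousOn.mul
      · exact ((continuous_const.sub hc).pow v).continuousOn
      · exact hP₂cont.comp hc.continuousOn (Set.mapsTo_preimage c _)
    have hint : IntegrableOn g₃ T₃ := hcont.integrableOn_compact hT₃cpt
    have hsub : S₃ ⊆ T₃ := Set.preimage_mono Set.Ioo_subset_Icc_self
    refine (hint.mono_set hsub).congr_fun ?_ mS₃
    intro ω hω
    have := hK₃ (ω*h) hω.1 hω.2
    simp only [hg₃, hFdef, this]
  have : Integrable Fh := by
    rw [hdec]
    exact (((integrable_indicator_iff mS₁).mpr int1).add
      ((integrable_indicator_iff mS₂).mpr int2)).add ((integrable_indicator_iff mS₃).mpr int3)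
  exact this

set_option maxHeartbeats 1600000 in
theorem stmt_18 (v : ℕ) (hv : 1 ≤ v) (P₁ P₂ : ℝ → ℝ)
    (hP₁cont : ContinuousOn P₁ (Set.Icc 1 2))
    (hP₁ne : ∀ x ∈ Set.Icc (1 : ℝ) 2, P₁ x ≠ 0)
    (hP₂cont : ContinuousOn P₂ (Set.Icc 3 4))
    (K : ℝ → ℝ)
    (hK₁ : ∀ ω : ℝ, 1 < |ω| → |ω| < 2 → K ω = (|ω| - 1) ^ v * P₁ |ω|)
    (hK₂ : ∀ ω : ℝ, 2 ≤ |ω| → |ω| ≤ 3 → K ω = 1)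
    (hK₃ : ∀ ω : ℝ, 3 < |ω| → |ω| < 4 → K ω = (4 - |ω|) ^ v * P₂ |ω|)
    (hK₀ : ∀ ω : ℝ, (|ω| ≤ 1 ∨ 4 ≤ |ω|) → K ω = 0)
    (hKrange : ∀ ω : ℝ, 0 ≤ K ω ∧ K ω ≤ 1)
    (A G al : ℝ) (hG : 0 ≤ G) (hal : 0 ≤ al) (l : ℕ) (hl : l = 1 ∨ l = 2) :
    (G = 0 →
      ∃ c C h₀ : ℝ, 0 < c ∧ c ≤ C ∧ 0 < h₀ ∧ ∀ h : ℝ, 0 < h → h < h₀ →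
        c * h ^ (2 * A - 1) ≤
            (∫ ω : ℝ, (ω ^ 2 + 1) ^ (-A) * Real.exp (-G * |ω| ^ al) * K (ω * h) ^ l) ∧
          (∫ ω : ℝ, (ω ^ 2 + 1) ^ (-A) * Real.exp (-G * |ω| ^ al) * K (ω * h) ^ l) ≤
            C * h ^ (2 * A - 1)) ∧
    (0 < G → 0 < al →
      ∃ c C h₀ : ℝ, 0 < c ∧ c ≤ C ∧ 0 < h₀ ∧ ∀ h : ℝ, 0 < h → h < h₀ →
        c * h ^ (2 * A + al * ((l : ℝ) * (v : ℝ) + 1) - 1) * Real.exp (-G * h ^ (-al)) ≤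
            (∫ ω : ℝ, (ω ^ 2 + 1) ^ (-A) * Real.exp (-G * |ω| ^ al) * K (ω * h) ^ l) ∧
          (∫ ω : ℝ, (ω ^ 2 + 1) ^ (-A) * Real.exp (-G * |ω| ^ al) * K (ω * h) ^ l) ≤
            C * h ^ (2 * A + al * ((l : ℝ) * (v : ℝ) + 1) - 1) *
              Real.exp (-G * h ^ (-al))) := by
  have hl1 : 1 ≤ l := by rcases hl with h | h <;> omega
  have hl0 : l ≠ 0 := by omega
  obtain ⟨ca, CA, hca, hcaCA, hw⟩ := aux_w_bounds A
  have hCA : 0 < CA := lt_of_lt_of_le hca hcaCA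
  have hInt : ∀ h : ℝ, 0 < h →
      Integrable (fun ω : ℝ => (ω ^ 2 + 1) ^ (-A) * Real.exp (-G * |ω| ^ al) * K (ω * h) ^ l) :=
    fun h hh => aux_integrable v P₁ P₂ K hP₁cont hP₂cont hK₁ hK₂ hK₃ hK₀ A G al hal l hl1 hh
  have hFnn : ∀ h ω : ℝ,
      0 ≤ (ω ^ 2 + 1) ^ (-A) * Real.exp (-G * |ω| ^ al) * K (ω * h) ^ l := by
    intro h ω
    have h1 : (0:ℝ) ≤ (ω ^ 2 + 1) ^ (-A) := Real.rpow_nonneg (by positivity) _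
    exact mul_nonneg (mul_nonneg h1 (Real.exp_nonneg _)) (pow_nonneg (hKrange _).1 l)
  have hwpre : ∀ h ω : ℝ, 0 < h → h < 1 → 1 < |ω * h| → |ω * h| ≤ 4 →
      ca * h ^ (2*A) ≤ (ω ^ 2 + 1) ^ (-A) ∧ (ω ^ 2 + 1) ^ (-A) ≤ CA * h ^ (2*A) := by
    intro h ω hh hh1 hlo hhi
    rw [abs_mul, abs_of_pos hh] at hlo hhi
    exact hw h ω hh hh1.le ((div_le_iff₀ hh).mpr hlo.le) ((le_div_iff₀ hh).mpr hhi)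
  constructor
  · -- Part (i): G = 0
    intro hG0
    subst hG0
    have hexp1 : ∀ ω : ℝ, Real.exp (-0 * |ω| ^ al) = 1 := by intro ω; norm_num
    refine ⟨ca, max ca (8 * CA), 1, hca, le_max_left _ _, one_pos, fun h hh hh1 => ?_⟩
    set Fh : ℝ → ℝ := fun ω => (ω ^ 2 + 1) ^ (-A) * Real.exp (-0 * |ω| ^ al) * K (ω * h) ^ l
      with hFdef
    have hIntF : Integrable Fh := hInt h hh
    have hpow : h ^ (2*A - 1) = h ^ (2*A) * h⁻¹ := by
      rw [show 2*A - 1 = 2*A + (-1) by ring, Real.rpow_add hh, Real.rpow_neg_one]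
    have hpownn : (0:ℝ) ≤ h ^ (2*A) := Real.rpow_nonneg hh.le _
    constructor
    · -- lower bound
      set T := Set.Icc (2/h) (3/h) with hT
      have hIntInd : Integrable (T.indicator (fun _ => ca * h ^ (2*A))) := by
        rw [integrable_indicator_iff measurableSet_Icc]
        exact integrableOn_const (by rw [Real.volume_Icc]; exact ENNReal.ofReal_ne_top)
      have hpt : ∀ ω : ℝ, T.indicator (fun _ => ca * h ^ (2*A)) ω ≤ Fh ω := by
        intro ω
        by_cases hmem : ω ∈ T
        · rw [Set.indicator_of_mem hmem]
          obtain ⟨hω1, hω2⟩ := hmem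
          have hh2 : (0:ℝ) < 2/h := by positivity
          have hωpos : 0 < ω := lt_of_lt_of_le hh2 hω1
          have hωh1 : 2 ≤ ω * h := (div_le_iff₀ hh).mp hω1
          have hωh2 : ω * h ≤ 3 := (le_div_iff₀ hh).mp hω2
          have habs : |ω * h| = ω * h := abs_of_pos (by linarith)
          have hKval : K (ω * h) = 1 := hK₂ _ (by rw [habs]; exact hωh1) (by rw [habs]; linarith)
          have hwlo := (hwpre h ω hh hh1 (by rw [habs]; linarith) (by rw [habs]; linarith)).1
          rw [hFdef]
          simp only [hKval, one_pow, mul_one, hexp1]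
          exact hwlo
        · rw [Set.indicator_of_notMem hmem]; exact hFnn h ω
      have hmono := MeasureTheory.integral_mono hIntInd hIntF hpt
      rw [MeasureTheory.integral_indicator_const _ measurableSet_Icc] at hmono
      rw [measureReal_def, Real.volume_Icc] at hmono
      have hvol : (3:ℝ)/h - 2/h = h⁻¹ := by rw [div_sub_div_same]; norm_num
      rw [ENNReal.toReal_ofReal (by rw [hvol]; positivity)] at hmono
      rw [hvol] at hmono
      calc ca * h ^ (2*A - 1) = h⁻¹ • (ca * h ^ (2*A)) := by rw [hpow, smul_eq_mul]; ring
        _ ≤ ∫ ω, Fh ω := hmono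
    · -- upper bound
      set B := Set.Icc (-(4/h)) (4/h) with hB
      have hIntInd : Integrable (B.indicator (fun _ => CA * h ^ (2*A))) := by
        rw [integrable_indicator_iff measurableSet_Icc]
        exact integrableOn_const (by rw [Real.volume_Icc]; exact ENNReal.ofReal_ne_top)
      have hpt : ∀ ω : ℝ, Fh ω ≤ B.indicator (fun _ => CA * h ^ (2*A)) ω := by
        intro ω
        by_cases hmem : ω ∈ B
        · rw [Set.indicator_of_mem hmem]
          rcases le_or_gt (|ω * h|) 1 with c1 | c1
          · have hK : K (ω * h) = 0 := hK₀ _ (Or.inl c1)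
            rw [hFdef]
            simp only [hK, zero_pow hl0, mul_zero]
            positivity
          · have hωle : |ω * h| ≤ 4 := by
              rw [abs_mul, abs_of_pos hh]
              have : |ω| ≤ 4/h := abs_le.mpr hmem
              calc |ω| * h ≤ (4/h) * h := by nlinarith [abs_nonneg ω]
                _ = 4 := by field_simp
            have hwhi := (hwpre h ω hh hh1 c1 hωle).2
            have hKle : K (ω * h) ^ l ≤ 1 := pow_le_one₀ (hKrange _).1 (hKrange _).2
            have hKnn : 0 ≤ K (ω * h) ^ l := pow_nonneg (hKrange _).1 l
            have hwnn : (0:ℝ) ≤ (ω ^ 2 + 1) ^ (-A) := Real.rpow_nonneg (by positivity) _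
            rw [hFdef]
            simp only [hexp1, mul_one]
            calc (ω ^ 2 + 1) ^ (-A) * K (ω * h) ^ l ≤ (CA * h ^ (2*A)) * 1 := by
                  apply mul_le_mul hwhi hKle hKnn (by positivity)
              _ = CA * h ^ (2*A) := by ring
        · rw [Set.indicator_of_notMem hmem]
          have h4 : 4/h < |ω| := by
            have hor : ω < -(4/h) ∨ 4/h < ω := by
              by_contra hcon
              push_neg at hcon
              exact hmem ⟨hcon.1, hcon.2⟩
            rcases hor with hlt | hlt
            · calc 4/h < -ω := by linarith
                _ ≤ |ω| := neg_le_abs ω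
            · exact lt_of_lt_of_le hlt (le_abs_self ω)
          have : 4 ≤ |ω * h| := by
            rw [abs_mul, abs_of_pos hh]
            have := (div_lt_iff₀ hh).mp h4
            linarith
          have hK : K (ω * h) = 0 := hK₀ _ (Or.inr this)
          rw [hFdef]
          simp only [hK, zero_pow hl0, mul_zero, le_refl]
      have hmono := MeasureTheory.integral_mono hIntF hIntInd hpt
      rw [MeasureTheory.integral_indicator_const _ measurableSet_Icc] at hmono
      rw [measureReal_def, Real.volume_Icc] at hmono
      have hvol : (4:ℝ)/h - (-(4/h)) = 8 * h⁻¹ := by field_simp; ring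
      rw [ENNReal.toReal_ofReal (by rw [hvol]; positivity)] at hmono
      rw [hvol] at hmono
      calc (∫ ω, Fh ω) ≤ (8 * h⁻¹) • (CA * h ^ (2*A)) := hmono
        _ = (8 * CA) * h ^ (2*A - 1) := by rw [hpow, smul_eq_mul]; ring
        _ ≤ max ca (8 * CA) * h ^ (2*A - 1) := by
            apply mul_le_mul_of_nonneg_right (le_max_right _ _)
            rw [hpow]; positivity
  · -- Part (ii)
    intro hGpos halpos
    obtain ⟨xm, hxmmem, hxmmin⟩ := isCompact_Icc.exists_isMinOn
      (Set.nonempty_Icc.mpr (by norm_num : (1:ℝ) ≤ 2)) hP₁cont.abs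
    obtain ⟨xM, hxMmem, hxMmax⟩ := isCompact_Icc.exists_isMaxOn
      (Set.nonempty_Icc.mpr (by norm_num : (1:ℝ) ≤ 2)) hP₁cont.abs
    set m₁ := |P₁ xm| with hm₁def
    set M₁ := |P₁ xM| with hM₁def
    have hm₁pos : 0 < m₁ := abs_pos.mpr (hP₁ne xm hxmmem)
    have hM₁pos : 0 < M₁ := lt_of_lt_of_le hm₁pos (isMaxOn_iff.mp hxMmax xm hxmmem)
    have hP₁upper : ∀ x : ℝ, 1 ≤ x → x ≤ 2 → P₁ x ≤ M₁ := fun x h1 h2 =>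
      le_trans (le_abs_self _) (isMaxOn_iff.mp hxMmax x ⟨h1, h2⟩)
    have hP₁lower : ∀ x : ℝ, 1 < x → x < 2 → m₁ ≤ P₁ x := by
      intro x h1 h2
      have hxabs : |x| = x := abs_of_pos (by linarith)
      have hKx := hK₁ x (by rw [hxabs]; exact h1) (by rw [hxabs]; exact h2)
      rw [hxabs] at hKx
      have hKnn := (hKrange x).1
      rw [hKx] at hKnn
      have hpow : (0:ℝ) < (x-1)^v := pow_pos (by linarith) v
      have hP₁nn : 0 ≤ P₁ x := by nlinarith [hpow, hKnn]
      have := isMinOn_iff.mp hxmmin x ⟨by linarith, by linarith⟩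
      rwa [abs_of_nonneg hP₁nn] at this
    set EE := al * Real.exp al with hEE
    have hEEpos : 0 < EE := by rw [hEE]; positivity
    clear_value EE
    clear_value m₁ M₁
    set clow := ca * Real.exp (-(G * EE)) * m₁ ^ l / 2 ^ (l*v+1) with hclow
    have hclowpos : 0 < clow := by rw [hclow]; positivity
    clear_value clow
    set C₁ := 2 * CA * M₁ ^ l * (Nat.factorial (l*v) : ℝ) * (4 / (al * G)) ^ (l*v+1) with hC₁
    set eps := ((2:ℝ) ^ (al:ℝ) - 1) * G with heps
    have h2al : (1:ℝ) < (2:ℝ) ^ (al:ℝ) :=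
      (Real.one_lt_rpow_iff_of_pos (by norm_num)).mpr (Or.inl ⟨by norm_num, halpos⟩)
    have hepspos : 0 < eps := by rw [heps]; exact mul_pos (by linarith) hGpos
    clear_value eps
    set C₂ := 8 * CA * (Nat.factorial (l*v+1) : ℝ) / eps ^ (l*v+1) with hC₂
    clear_value C₁ C₂
    refine ⟨clow, max clow (C₁ + C₂), 1, hclowpos, le_max_left _ _, one_pos,
      fun h hh hh1 => ?_⟩
    set δ := h ^ al with hδ
    have hδpos : 0 < δ := by rw [hδ]; exact Real.rpow_pos_of_pos hh al
    have hδlt1 : δ < 1 := by rw [hδ]; exact Real.rpow_lt_one hh.le hh1 halpos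
    have hδpow : δ ^ (l*v+1) = h ^ (al * ((l*v+1 : ℕ):ℝ)) := by
      rw [hδ, ← Real.rpow_natCast (h ^ al) (l*v+1), ← Real.rpow_mul hh.le]
    clear_value δ
    set s := G / δ with hs
    have hspos : 0 < s := by rw [hs]; positivity
    clear_value s
    have hgexp : Real.exp (-G * h ^ (-al)) = Real.exp (-s) := by
      rw [Real.rpow_neg hh.le, ← hδ]
      congr 1
      rw [hs]
      ring
    have hsplit : h ^ (2*A + al * ((l:ℝ)*(v:ℝ) + 1) - 1) = h ^ (2*A) * (δ ^ (l*v+1) * h⁻¹) := by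
      have hcast : 2*A + al * ((l:ℝ)*(v:ℝ) + 1) - 1 = 2*A + (al * ((l*v+1 : ℕ):ℝ) + (-1)) := by
        push_cast
        ring
      rw [hcast, Real.rpow_add hh, Real.rpow_add hh, Real.rpow_neg_one, hδpow]
    set Fh : ℝ → ℝ := fun ω => (ω ^ 2 + 1) ^ (-A) * Real.exp (-G * |ω| ^ al) * K (ω * h) ^ l
      with hFdef
    have hIntF : Integrable Fh := hInt h hh
    have habsmul : ∀ ω : ℝ, |ω * h| = |ω| * h := fun ω => by rw [abs_mul, abs_of_pos hh]
    constructor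
    · -- lower bound
      set T := Set.Icc ((1+δ/2)/h) ((1+δ)/h) with hT
      set cst := (ca * h^(2*A)) * Real.exp (-(G*EE) + -s) * ((δ/2)^v * m₁)^l with hcst
      have hcstnn : 0 ≤ cst := by rw [hcst]; positivity
      clear_value cst
      have hIntInd : Integrable (T.indicator (fun _ => cst)) := by
        rw [integrable_indicator_iff measurableSet_Icc]
        exact integrableOn_const (by rw [Real.volume_Icc]; exact ENNReal.ofReal_ne_top)
      have hpt : ∀ ω : ℝ, T.indicator (fun _ => cst) ω ≤ Fh ω := by
        intro ω
        by_cases hmem : ω ∈ T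
        · rw [Set.indicator_of_mem hmem]
          obtain ⟨hω1, hω2⟩ := hmem
          have hqpos : (0:ℝ) < (1+δ/2)/h := by positivity
          have hωpos : 0 < ω := lt_of_lt_of_le hqpos hω1
          have hωh1 : 1 + δ/2 ≤ ω * h := (div_le_iff₀ hh).mp hω1
          have hωh2 : ω * h ≤ 1 + δ := (le_div_iff₀ hh).mp hω2
          have habs : |ω * h| = ω * h := abs_of_pos (mul_pos hωpos hh)
          have h1lt : 1 < |ω*h| := by rw [habs]; linarith
          have h2gt : |ω*h| < 2 := by rw [habs]; linarith
          have hKval := hK₁ _ h1lt h2gt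
          rw [habs] at hKval
          have hKlow : (δ/2)^v * m₁ ≤ K (ω*h) := by
            rw [hKval]
            have hbase : δ/2 ≤ ω*h - 1 := by linarith
            have hpowle : (δ/2)^v ≤ (ω*h - 1)^v := pow_le_pow_left₀ (by positivity) hbase v
            have hP := hP₁lower (ω*h) (by linarith) (by linarith)
            exact mul_le_mul hpowle hP hm₁pos.le (pow_nonneg (by linarith) v)
          have hKlnn : (0:ℝ) ≤ (δ/2)^v * m₁ := by positivity
          have hKl : ((δ/2)^v * m₁)^l ≤ K (ω*h)^l := pow_le_pow_left₀ hKlnn hKlow l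
          have habsω : |ω| = ω := abs_of_pos hωpos
          have hexplo : Real.exp (-(G*EE) + -s) ≤ Real.exp (-G * |ω|^al) := by
            apply Real.exp_le_exp.mpr
            rw [habsω]
            have h1 : ω ^ al ≤ (1+δ) ^ al / δ := by
              calc ω ^ al ≤ ((1+δ)/h) ^ al := Real.rpow_le_rpow hωpos.le hω2 hal
                _ = (1+δ)^al / δ := by rw [Real.div_rpow (by linarith) hh.le, ← hδ]
            have h3 : (1+δ)^al ≤ 1 + EE * δ := by
              have hu := aux_rpow_upper hal hδpos.le hδlt1.le
              rw [hEE]; linarith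
            have h5 : ω ^ al ≤ (1 + EE*δ)/δ :=
              le_trans h1 ((div_le_div_iff_of_pos_right hδpos).mpr h3)
            have h7 : G * ω^al ≤ G * ((1 + EE*δ)/δ) := mul_le_mul_of_nonneg_left h5 hG
            have h8 : G * ((1 + EE*δ)/δ) = s + G*EE := by
              rw [hs]; field_simp
            linarith
          have hwlo := (hwpre h ω hh hh1 h1lt (by rw [habs]; linarith)).1
          rw [hFdef, hcst]
          have hwnn : (0:ℝ) ≤ ca * h ^ (2*A) := by positivity
          have hexpnn : (0:ℝ) ≤ Real.exp (-(G*EE) + -s) := (Real.exp_pos _).le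
          apply mul_le_mul (mul_le_mul hwlo hexplo hexpnn (Real.rpow_nonneg (by positivity) _))
            hKl (pow_nonneg hKlnn l)
            (mul_nonneg (Real.rpow_nonneg (by positivity) _) (Real.exp_nonneg _))
        · rw [Set.indicator_of_notMem hmem]; exact hFnn h ω
      have hmono := MeasureTheory.integral_mono hIntInd hIntF hpt
      rw [MeasureTheory.integral_indicator_const _ measurableSet_Icc, measureReal_def, Real.volume_Icc] at hmono
      have hvol : (1+δ)/h - (1+δ/2)/h = δ/2 * h⁻¹ := by field_simp; ring
      rw [ENNReal.toReal_ofReal (by rw [hvol]; positivity), hvol, smul_eq_mul] at hmono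
      refine le_trans (le_of_eq ?_) hmono
      rw [hgexp, hsplit, hcst, hclow, Real.exp_add]
      simp only [div_eq_mul_inv, mul_pow, inv_pow]
      ring
    · -- upper bound
      set U := Set.Ioo (-(2/h)) (-(1/h)) ∪ Set.Ioo (1/h) (2/h) with hU
      have hUeq : {ω : ℝ | 1 < |ω * h| ∧ |ω * h| < 2} = U := by
        have := aux_set_eq (a := 1) (b := 2) (h := h) hh one_pos
        rw [hU]; exact this
      set μ := G * al / (4 * δ) with hμ
      have hμpos : 0 < μ := by rw [hμ]; positivity
      clear_value μ
      set D := CA * h^(2*A) * M₁^l * ((Nat.factorial (l*v) : ℝ) / μ^(l*v)) * Real.exp (-s)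
        with hD
      have hDnn : 0 ≤ D := by rw [hD]; positivity
      clear_value D
      set c23 := CA * h^(2*A) * Real.exp (-((2:ℝ)^(al:ℝ) * s)) with hc23
      have hc23nn : 0 ≤ c23 := by rw [hc23]; positivity
      clear_value c23
      set B := Set.Icc (-(4/h)) (4/h) with hB
      have mU : MeasurableSet U := measurableSet_Ioo.union measurableSet_Ioo
      have hψcont : Continuous (fun ω : ℝ => D * Real.exp (-(μ * (|ω| * h - 1)))) := by
        apply continuous_const.mul
        apply Real.continuous_exp.comp
        fun_prop
      have hIntψ : Integrable (U.indicator (fun ω : ℝ => D * Real.exp (-(μ * (|ω| * h - 1))))) := by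
        rw [integrable_indicator_iff mU]
        have hsub : U ⊆ Set.Icc (-(2/h)) (2/h) := by
          intro x hx
          have h1h : (0:ℝ) < 1/h := by positivity
          have h2h : (0:ℝ) < 2/h := by positivity
          rcases hx with hx | hx
          · exact ⟨hx.1.le, by linarith [hx.2]⟩
          · exact ⟨by linarith [hx.1], hx.2.le⟩
        exact (hψcont.integrableOn_Icc).mono_set hsub
      have hIntc23 : Integrable (B.indicator (fun _ => c23)) := by
        rw [integrable_indicator_iff measurableSet_Icc]
        exact integrableOn_const (by rw [Real.volume_Icc]; exact ENNReal.ofReal_ne_top)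
      have hpt : ∀ ω : ℝ, Fh ω ≤ U.indicator (fun ω : ℝ => D * Real.exp (-(μ * (|ω| * h - 1)))) ω
          + B.indicator (fun _ => c23) ω := by
        intro ω
        have hind2nn : 0 ≤ B.indicator (fun _ => c23) ω :=
          Set.indicator_nonneg (fun _ _ => hc23nn) ω
        have hind1nn : 0 ≤ U.indicator (fun ω : ℝ => D * Real.exp (-(μ * (|ω| * h - 1)))) ω :=
          Set.indicator_nonneg (fun _ _ => mul_nonneg hDnn (Real.exp_nonneg _)) ω
        rcases le_or_gt (|ω*h|) 1 with c1 | c1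
        · have hK : K (ω*h) = 0 := hK₀ _ (Or.inl c1)
          rw [hFdef]
          simp only [hK, zero_pow hl0, mul_zero]
          exact add_nonneg hind1nn hind2nn
        · rcases lt_or_ge (|ω*h|) 2 with c2 | c2
          · -- main region
            have hmemU : ω ∈ U := by
              rw [← hUeq]; exact ⟨c1, c2⟩
            rw [Set.indicator_of_mem hmemU]
            refine le_trans ?_ (le_add_of_nonneg_right hind2nn)
            have habs := habsmul ω
            obtain ⟨u, hu⟩ : ∃ u : ℝ, u = |ω| * h - 1 := ⟨_, rfl⟩
            have hu0 : 0 < u := by rw [habs] at c1; rw [hu]; linarith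
            have hu1 : u < 1 := by rw [habs] at c2; rw [hu]; linarith
            have hKval := hK₁ (ω*h) c1 c2
            have habs1 : |ω*h| = 1 + u := by rw [habs, hu]; ring
            have hKle : K (ω*h) ≤ u^v * M₁ := by
              rw [hKval, habs1, show (1:ℝ) + u - 1 = u by ring]
              exact mul_le_mul_of_nonneg_left
                (hP₁upper (1+u) (by linarith) (by linarith)) (pow_nonneg hu0.le v)
            have hKnn : 0 ≤ K (ω*h) := (hKrange _).1
            have hKlle : K (ω*h)^l ≤ (u^v * M₁)^l :=
              pow_le_pow_left₀ hKnn hKle l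
            have hωabsval : |ω| = (1+u)/h := by
              rw [hu]; field_simp; ring
            have hωal : s + 2*(μ*u) ≤ G * |ω|^al := by
              have h1 : |ω|^al = (1+u)^al / δ := by
                rw [hωabsval, Real.div_rpow (by linarith) hh.le, ← hδ]
              have h2 : 1 + al/2 * u ≤ (1+u)^al := aux_rpow_lower halpos hu0.le hu1.le
              have h3 : G * ((1 + al/2*u)/δ) ≤ G * ((1+u)^al/δ) :=
                mul_le_mul_of_nonneg_left ((div_le_div_iff_of_pos_right hδpos).mpr h2) hG
              have h4 : G * ((1 + al/2*u)/δ) = s + 2*(μ*u) := by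
                rw [hs, hμ]; field_simp; ring
              rw [h1]; linarith
            have hexple : Real.exp (-G * |ω|^al) ≤
                Real.exp (-s) * (Real.exp (-(μ*u)) * Real.exp (-(μ*u))) := by
              rw [← Real.exp_add, ← Real.exp_add]
              apply Real.exp_le_exp.mpr
              linarith [hωal]
            have hfact : (u^v)^l * Real.exp (-(μ*u)) ≤ (Nat.factorial (l*v) : ℝ)/μ^(l*v) := by
              have := aux_pow_mul_exp_neg_le (l*v) hμpos hu0.le
              rwa [show u^(l*v) = (u^v)^l by rw [← pow_mul, Nat.mul_comm]] at this
            have hwhi := (hwpre h ω hh hh1 c1 (by linarith)).2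
            have hwnn : (0:ℝ) ≤ (ω ^ 2 + 1) ^ (-A) := Real.rpow_nonneg (by positivity) _
            calc Fh ω ≤ (CA * h^(2*A)) * (Real.exp (-s) * (Real.exp (-(μ*u)) * Real.exp (-(μ*u))))
                  * ((u^v*M₁)^l) := by
                  rw [hFdef]
                  apply mul_le_mul (mul_le_mul hwhi hexple (Real.exp_nonneg _) (by positivity))
                    hKlle (pow_nonneg hKnn l) (by positivity)
              _ = (CA * h^(2*A) * M₁^l * Real.exp (-s)) *
                  (((u^v)^l * Real.exp (-(μ*u))) * Real.exp (-(μ*u))) := by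
                  rw [mul_pow]; ring
              _ ≤ (CA * h^(2*A) * M₁^l * Real.exp (-s)) *
                  (((Nat.factorial (l*v) : ℝ)/μ^(l*v)) * Real.exp (-(μ*u))) := by
                  apply mul_le_mul_of_nonneg_left
                    (mul_le_mul_of_nonneg_right hfact (Real.exp_nonneg _)) (by positivity)
              _ = D * Real.exp (-(μ * (|ω| * h - 1))) := by
                  rw [hD, ← hu]; ring
          · rcases le_or_gt (|ω*h|) 4 with c4 | c4
            · have hmemB : ω ∈ B := by
                have habs := habsmul ω
                rw [habs] at c4
                exact abs_le.mp ((le_div_iff₀ hh).mpr c4)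
              rw [Set.indicator_of_mem hmemB]
              refine le_trans ?_ (le_add_of_nonneg_left hind1nn)
              have hwhi := (hwpre h ω hh hh1 (by linarith) c4).2
              have hKlle : K (ω*h)^l ≤ 1 := pow_le_one₀ (hKrange _).1 (hKrange _).2
              have habs := habsmul ω
              have hωge : 2/h ≤ |ω| := by
                rw [habs] at c2; exact (div_le_iff₀ hh).mpr c2
              have hexple : Real.exp (-G * |ω|^al) ≤ Real.exp (-((2:ℝ)^(al:ℝ) * s)) := by
                apply Real.exp_le_exp.mpr
                have h1 : ((2:ℝ)/h)^al ≤ |ω|^al :=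
                  Real.rpow_le_rpow (by positivity) hωge hal
                have h2 : ((2:ℝ)/h)^al = (2:ℝ)^(al:ℝ) / δ := by
                  rw [Real.div_rpow (by norm_num) hh.le, ← hδ]
                rw [h2] at h1
                have h3 : G * ((2:ℝ)^(al:ℝ)/δ) ≤ G * |ω|^al := mul_le_mul_of_nonneg_left h1 hG
                have h4 : G * ((2:ℝ)^(al:ℝ)/δ) = (2:ℝ)^(al:ℝ) * s := by rw [hs]; ring
                linarith
              calc Fh ω ≤ (CA * h^(2*A)) * Real.exp (-((2:ℝ)^(al:ℝ)*s)) * 1 := by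
                    rw [hFdef]
                    apply mul_le_mul (mul_le_mul hwhi hexple (Real.exp_nonneg _) (by positivity))
                      hKlle (pow_nonneg (hKrange _).1 l) (by positivity)
                _ = c23 := by rw [hc23]; ring
            · have hK : K (ω*h) = 0 := hK₀ _ (Or.inr c4.le)
              rw [hFdef]
              simp only [hK, zero_pow hl0, mul_zero]
              exact add_nonneg hind1nn hind2nn
      have hmono := MeasureTheory.integral_mono hIntF (hIntψ.add hIntc23) hpt
      simp only [Pi.add_apply] at hmono
      rw [MeasureTheory.integral_add hIntψ hIntc23,
        MeasureTheory.integral_indicator mU,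
        MeasureTheory.integral_indicator_const _ measurableSet_Icc, measureReal_def, Real.volume_Icc] at hmono
      have hvol : (4:ℝ)/h - (-(4/h)) = 8 * h⁻¹ := by field_simp; ring
      rw [ENNReal.toReal_ofReal (by rw [hvol]; positivity), hvol, smul_eq_mul] at hmono
      have haux : (∫ x in U, D * Real.exp (-(μ * (|x| * h - 1)))) ≤ D * (2/(μ*h)) := by
        rw [hU]
        exact aux_union_integral hh hμpos hDnn
      have e1 : D * (2/(μ*h)) = C₁ * (h^(2*A) * (δ^(l*v+1) * h⁻¹)) * Real.exp (-s) := by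
        rw [hD, hμ, hC₁]
        simp only [div_pow, mul_pow]
        field_simp
        ring
      have hexpbd : Real.exp (-((2:ℝ)^(al:ℝ) * s)) ≤
          ((Nat.factorial (l*v+1) : ℝ)/eps^(l*v+1)) * δ^(l*v+1) * Real.exp (-s) := by
        have hy : (0:ℝ) ≤ δ⁻¹ := by positivity
        have hkey := aux_pow_mul_exp_neg_le (l*v+1) hepspos hy
        have hex : -((2:ℝ)^(al:ℝ) * s) = -(eps * δ⁻¹) + -s := by
          rw [heps, hs]; field_simp; ring
        rw [hex, Real.exp_add]
        apply mul_le_mul_of_nonneg_right _ (Real.exp_nonneg _)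
        rw [inv_pow] at hkey
        have hp : (0:ℝ) < δ^(l*v+1) := by positivity
        calc Real.exp (-(eps * δ⁻¹))
            = (δ^(l*v+1))⁻¹ * Real.exp (-(eps * δ⁻¹)) * δ^(l*v+1) := by field_simp
          _ ≤ ((Nat.factorial (l*v+1) : ℝ)/eps^(l*v+1)) * δ^(l*v+1) :=
              mul_le_mul_of_nonneg_right hkey hp.le
      have e2 : 8 * h⁻¹ * c23 ≤ C₂ * (h^(2*A) * (δ^(l*v+1) * h⁻¹)) * Real.exp (-s) := by
        rw [hc23, hC₂]
        calc 8 * h⁻¹ * (CA * h^(2*A) * Real.exp (-((2:ℝ)^(al:ℝ) * s)))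
            ≤ 8 * h⁻¹ * (CA * h^(2*A) *
              (((Nat.factorial (l*v+1) : ℝ)/eps^(l*v+1)) * δ^(l*v+1) * Real.exp (-s))) := by
              apply mul_le_mul_of_nonneg_left _ (by positivity)
              exact mul_le_mul_of_nonneg_left hexpbd (by positivity)
          _ = 8 * CA * (Nat.factorial (l*v+1) : ℝ) / eps^(l*v+1) *
              (h^(2*A) * (δ^(l*v+1) * h⁻¹)) * Real.exp (-s) := by ring
      calc (∫ ω, Fh ω) ≤ D * (2/(μ*h)) + 8 * h⁻¹ * c23 :=
            le_trans hmono (add_le_add haux (le_refl _))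
        _ ≤ C₁ * (h^(2*A) * (δ^(l*v+1) * h⁻¹)) * Real.exp (-s)
            + C₂ * (h^(2*A) * (δ^(l*v+1) * h⁻¹)) * Real.exp (-s) := by
            rw [e1]; exact add_le_add (le_refl _) e2
        _ = (C₁ + C₂) * (h^(2*A) * (δ^(l*v+1) * h⁻¹)) * Real.exp (-s) := by ring
        _ ≤ max clow (C₁ + C₂) * h ^ (2*A + al * ((l:ℝ)*(v:ℝ) + 1) - 1) *
            Real.exp (-G * h ^ (-al)) := by
            rw [hgexp, hsplit]
            apply mul_le_mul_of_nonneg_right _ (Real.exp_nonneg _)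
            apply mul_le_mul_of_nonneg_right (le_max_right _ _)
            positivity
end
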